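/- arXiv:1707.04452 — 6 statements merged into one kernel-verified Lean document; each statement's English description precedes it below -/
import Mathlib

section
/- The Petersen graph does not admit a 2-bisection. -/
open SimpleGraph Finset

/-- The subgraph of `G` consisting of edges whose endpoints receive the same
colour under the 2-colouring `c`. Its connected components are the
monochromatic components of the colouring. -/
def monoSubgraph {V : Type*} (G : SimpleGraph V) (c : V → Bool) : SimpleGraph V where
  Adj u v := G.Adj u v ∧ c u = c v
  symm := ⟨fun u v h => ⟨h.1.symm, h.2.symm⟩⟩
  loopless := ⟨fun v h => G.loopless.irrefl v h.1⟩

/-- `c` is a `k`-bisection of `G`: the two colour classes have the same size and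
every monochromatic component has at most `k` vertices. -/
def IsKBisection {V : Type*} (G : SimpleGraph V) (c : V → Bool) (k : ℕ) : Prop :=
  {v | c v = true}.ncard = {v | c v = false}.ncard ∧
    ∀ v : V, {w | (monoSubgraph G c).Reachable v w}.ncard ≤ k

/-- `G` is cubic: every vertex has degree 3. -/
def IsCubic {V : Type*} (G : SimpleGraph V) : Prop :=
  ∀ v : V, (G.neighborSet v).ncard = 3

/-- `G` is bridgeless: no edge is a cut-edge. -/
def Bridgeless {V : Type*} (G : SimpleGraph V) : Prop :=
  ∀ e ∈ G.edgeSet, ¬ G.IsBridge e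

/-- `G` is claw-free: no induced subgraph isomorphic to `K_{1,3}`. -/
def ClawFree {V : Type*} (G : SimpleGraph V) : Prop :=
  ¬ ∃ v a b c : V, a ≠ b ∧ a ≠ c ∧ b ≠ c ∧
    G.Adj v a ∧ G.Adj v b ∧ G.Adj v c ∧ ¬ G.Adj a b ∧ ¬ G.Adj a c ∧ ¬ G.Adj b c

/-- The diamond graph `K₄ - e` on `Fin 4`, with non-adjacent (degree-2)
vertices `0` and `1` and adjacent (degree-3) vertices `2` and `3`. -/
def diamondGraph : SimpleGraph (Fin 4) :=
  SimpleGraph.fromEdgeSet {s(0, 2), s(0, 3), s(1, 2), s(1, 3), s(2, 3)}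

/-- `f` realises the diamond graph as an induced subgraph of `G`. -/
def IsInducedDiamond {V : Type*} (G : SimpleGraph V) (f : Fin 4 → V) : Prop :=
  Function.Injective f ∧ ∀ i j, G.Adj (f i) (f j) ↔ diamondGraph.Adj i j

/-- The Petersen graph, as the Kneser graph `K(5,2)`: vertices are the
2-element subsets of a 5-element set, adjacent iff disjoint. -/
def petersenGraph : SimpleGraph {s : Finset (Fin 5) // s.card = 2} where
  Adj x y := x ≠ y ∧ Disjoint x.1 y.1
  symm := ⟨fun x y h => ⟨h.1.symm, h.2.symm⟩⟩
  loopless := ⟨fun x h => h.1 rfl⟩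


abbrev PV := {s : Finset (Fin 5) // s.card = 2}

instance : DecidableRel petersenGraph.Adj :=
  fun x y => decidable_of_iff (x ≠ y ∧ Disjoint x.1 y.1) Iff.rfl

def pvList : List PV :=
  [⟨{0,1}, rfl⟩, ⟨{0,2}, rfl⟩, ⟨{0,3}, rfl⟩, ⟨{0,4}, rfl⟩, ⟨{1,2}, rfl⟩,
   ⟨{1,3}, rfl⟩, ⟨{1,4}, rfl⟩, ⟨{2,3}, rfl⟩, ⟨{2,4}, rfl⟩, ⟨{3,4}, rfl⟩]

def colOf (b0 b1 b2 b3 b4 b5 b6 b7 b8 b9 : Bool) (v : PV) : Bool :=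
  if v = pvList[0] then b0 else if v = pvList[1] then b1 else
  if v = pvList[2] then b2 else if v = pvList[3] then b3 else
  if v = pvList[4] then b4 else if v = pvList[5] then b5 else
  if v = pvList[6] then b6 else if v = pvList[7] then b7 else
  if v = pvList[8] then b8 else b9

lemma pv_cases : ∀ v : PV, v = pvList[0] ∨ v = pvList[1] ∨ v = pvList[2] ∨
    v = pvList[3] ∨ v = pvList[4] ∨ v = pvList[5] ∨ v = pvList[6] ∨
    v = pvList[7] ∨ v = pvList[8] ∨ v = pvList[9] := by decide

set_option maxHeartbeats 10000000 in
set_option maxRecDepth 20000 in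
lemma key : ∀ b0 b1 b2 b3 b4 b5 b6 b7 b8 b9 : Bool,
    (Finset.univ.filter (fun v => colOf b0 b1 b2 b3 b4 b5 b6 b7 b8 b9 v = true)).card =
      (Finset.univ.filter (fun v => colOf b0 b1 b2 b3 b4 b5 b6 b7 b8 b9 v = false)).card →
    ∃ a b d : PV, a ≠ b ∧ a ≠ d ∧ b ≠ d ∧
      petersenGraph.Adj b a ∧ petersenGraph.Adj b d ∧
      colOf b0 b1 b2 b3 b4 b5 b6 b7 b8 b9 a = colOf b0 b1 b2 b3 b4 b5 b6 b7 b8 b9 b ∧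
      colOf b0 b1 b2 b3 b4 b5 b6 b7 b8 b9 b = colOf b0 b1 b2 b3 b4 b5 b6 b7 b8 b9 d := by
  decide

/-- The Petersen graph does not admit a 2-bisection. -/
theorem petersen_no_two_bisection :
    ¬ ∃ c : {s : Finset (Fin 5) // s.card = 2} → Bool,
      IsKBisection petersenGraph c 2 := by
  rintro ⟨c, hbal, hcomp⟩
  have hc : c = colOf (c pvList[0]) (c pvList[1]) (c pvList[2]) (c pvList[3])
      (c pvList[4]) (c pvList[5]) (c pvList[6]) (c pvList[7]) (c pvList[8]) (c pvList[9]) := by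
    funext v
    rcases pv_cases v with h|h|h|h|h|h|h|h|h|h <;> subst h <;> rfl
  have hbal' : (Finset.univ.filter (fun v => c v = true)).card =
      (Finset.univ.filter (fun v => c v = false)).card := by
    have h1 : {v | c v = true}.ncard = (Finset.univ.filter (fun v => c v = true)).card := by
      rw [Set.ncard_eq_toFinset_card']; congr 1; ext v; simp
    have h2 : {v | c v = false}.ncard = (Finset.univ.filter (fun v => c v = false)).card := by
      rw [Set.ncard_eq_toFinset_card']; congr 1; ext v; simp
    rw [← h1, ← h2]; exact hbal
  rw [hc] at hbal'
  obtain ⟨a, b, d, hab, had, hbd, hba, hbd', hcab, hcbd⟩ :=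
    key (c pvList[0]) (c pvList[1]) (c pvList[2]) (c pvList[3]) (c pvList[4])
      (c pvList[5]) (c pvList[6]) (c pvList[7]) (c pvList[8]) (c pvList[9]) hbal'
  rw [← hc] at hcab hcbd
  have hsub : ({a, b, d} : Set PV) ⊆ {w | (monoSubgraph petersenGraph c).Reachable b w} := by
    rintro x (rfl | rfl | rfl)
    · exact (SimpleGraph.Adj.reachable ⟨hba, hcab.symm⟩)
    · exact SimpleGraph.Reachable.refl _
    · exact (SimpleGraph.Adj.reachable ⟨hbd', hcbd⟩)
  have h3 : ({a, b, d} : Set PV).ncard = 3 := by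
    rw [Set.ncard_insert_of_notMem (by simp [hab, had]),
      Set.ncard_pair hbd]
  have := le_trans (h3 ▸ Set.ncard_le_ncard hsub (Set.toFinite _)) (hcomp b)
  omega
end

section
/- Let H be a bridgeless cubic multigraph and let H△ be the cubic graph obtained from H by replacing every vertex with a triangle (the truncation of H). Then H△ admits a 2-bisection. -/
open SimpleGraph Finset

/- Multigraph machinery: a multigraph is given by an edge-indexed family of
(arbitrarily oriented) endpoint pairs `ends : E → V × V`.  A *dart* is a pair
`(e, i) : E × Fin 2`, a half-edge of `e`; loops contribute two darts at the
same vertex, so degrees are counted correctly. -/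

/-- The vertex at which the dart `d` is based. -/
def dartVert {V E : Type*} (ends : E → V × V) (d : E × Fin 2) : V :=
  if d.2 = 0 then (ends d.1).1 else (ends d.1).2

/-- The multigraph is cubic: every vertex carries exactly 3 darts. -/
def MCubic {V E : Type*} (ends : E → V × V) : Prop :=
  ∀ v : V, {d : E × Fin 2 | dartVert ends d = v}.ncard = 3

/-- Reachability in the multigraph using only edges from `S`. -/
def MReach {V E : Type*} (ends : E → V × V) (S : Set E) : V → V → Prop :=
  Relation.ReflTransGen (fun u v => ∃ e ∈ S, ends e = (u, v) ∨ ends e = (v, u))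

/-- The multigraph is bridgeless: deleting any single edge does not destroy
reachability between any two vertices. -/
def MBridgeless {V E : Type*} (ends : E → V × V) : Prop :=
  ∀ e₀ : E, ∀ u v : V, MReach ends Set.univ u v → MReach ends {e | e ≠ e₀} u v

/-- The truncation `H△` of the multigraph: each vertex is replaced by a triangle
on its darts; two darts are adjacent iff they are based at the same vertex
(triangle edges) or are the two darts of one edge of `H`. -/
def truncation {V E : Type*} (ends : E → V × V) : SimpleGraph (E × Fin 2) where
  Adj d d' := d ≠ d' ∧ (dartVert ends d = dartVert ends d' ∨ d.1 = d'.1)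
  symm := ⟨fun d d' h => ⟨h.1.symm, h.2.imp Eq.symm Eq.symm⟩⟩
  loopless := ⟨fun d h => h.1 rfl⟩

/-- `M` is a perfect matching of the multigraph: every vertex carries exactly
one dart of an edge of `M`. -/
def MPerfectMatching {V E : Type*} (ends : E → V × V) (M : Set E) : Prop :=
  ∀ v : V, {d : E × Fin 2 | d.1 ∈ M ∧ dartVert ends d = v}.ncard = 1


namespace TwoBisectionAux

/-- The colour of a dart induced by an orientation `σ` of the edges: the two
darts of an edge always get opposite colours. -/
def dcolor {E : Type*} (σ : E → Bool) (d : E × Fin 2) : Bool :=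
  if d.2 = 0 then σ d.1 else ! σ d.1

/-- The other index of `Fin 2`. -/
def oth (i : Fin 2) : Fin 2 := if i = 0 then 1 else 0

lemma fin2_eq_or (i i' : Fin 2) : i = i' ∨ i = oth i' := by
  revert i i'; decide

lemma oth_oth (i : Fin 2) : oth (oth i) = i := by revert i; decide

lemma dcolor_oth {E : Type*} (σ : E → Bool) (e : E) (i : Fin 2) :
    dcolor σ (e, oth i) = ! dcolor σ (e, i) := by
  rcases fin2_eq_or i 0 with h | h <;> subst h <;> simp [dcolor, oth]

/-- Key combinatorial lemma: if every vertex of `A` carries at least two darts,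
then there is an orientation `σ` such that every vertex of `A` carries darts of
both colours. -/
lemma exists_nae {V E : Type*} [DecidableEq V] [DecidableEq E] :
    ∀ (n : ℕ) (ends : E → V × V) (A : Finset V),
      A.card = n →
      (∀ v ∈ A, ∃ d1 d2 : E × Fin 2, d1 ≠ d2 ∧ dartVert ends d1 = v ∧ dartVert ends d2 = v) →
      ∃ σ : E → Bool, ∀ v ∈ A,
        (∃ d, dartVert ends d = v ∧ dcolor σ d = true) ∧
        (∃ d, dartVert ends d = v ∧ dcolor σ d = false) := by
  intro n
  induction n with
  | zero =>
      intro ends A hA _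
      refine ⟨fun _ => true, fun v hv => absurd hv ?_⟩
      simp [Finset.card_eq_zero.mp hA]
  | succ n ih =>
      intro ends A hA hdeg
      obtain ⟨v, hv⟩ : A.Nonempty := Finset.card_pos.mp (by omega)
      have hAe : (A.erase v).card = n := by
        rw [Finset.card_erase_of_mem hv, hA]
        omega
      obtain ⟨⟨e1, i1⟩, ⟨e2, i2⟩, hd12, h1v, h2v⟩ := hdeg v hv
      by_cases hee : e1 = e2
      · -- the two darts lie on one edge: a loop at `v`, satisfied automatically
        subst hee
        have hii : i1 ≠ i2 := by
          intro h; exact hd12 (by rw [h])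
        obtain ⟨σ, hσ⟩ := ih ends (A.erase v) hAe
          (fun w hw => hdeg w (Finset.mem_of_mem_erase hw))
        refine ⟨σ, fun w hw => ?_⟩
        by_cases hwv : w = v
        · subst hwv
          have h12 : i1 = oth i2 := (fin2_eq_or i1 i2).resolve_left hii
          subst h12
          cases hc : dcolor σ (e1, i2)
          · exact ⟨⟨(e1, oth i2), h1v, by rw [dcolor_oth, hc]; rfl⟩,
              ⟨(e1, i2), h2v, hc⟩⟩
          · exact ⟨⟨(e1, i2), h2v, hc⟩,
              ⟨(e1, oth i2), h1v, by rw [dcolor_oth, hc]; rfl⟩⟩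
        · exact hσ w (Finset.mem_erase.mpr ⟨hwv, hw⟩)
      · -- two distinct edges at `v`: split off `v`, merging `e1` and `e2`
        set j1 := oth i1 with hj1
        set j2 := oth i2 with hj2
        set a := dartVert ends (e1, j1) with ha
        set b := dartVert ends (e2, j2) with hb
        set ends' := Function.update (Function.update ends e1 (v, v)) e2 (a, b) with hends'
        have hE2 : ends' e2 = (a, b) := by
          rw [hends', Function.update_self]
        have hE1 : ends' e1 = (v, v) := by
          rw [hends', Function.update_of_ne hee, Function.update_self]
        have hEo : ∀ e, e ≠ e1 → e ≠ e2 → ends' e = ends e := by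
          intro e he1 he2
          rw [hends', Function.update_of_ne he2, Function.update_of_ne he1]
        have huniq1 : ∀ w, w ≠ v → ∀ i : Fin 2, dartVert ends (e1, i) = w → i = j1 := by
          intro w hwv i hi
          rcases fin2_eq_or i i1 with h | h
          · subst h; rw [h1v] at hi; exact absurd hi.symm hwv
          · exact h.trans hj1.symm
        have huniq2 : ∀ w, w ≠ v → ∀ i : Fin 2, dartVert ends (e2, i) = w → i = j2 := by
          intro w hwv i hi
          rcases fin2_eq_or i i2 with h | h
          · subst h; rw [h2v] at hi; exact absurd hi.symm hwv
          · exact h.trans hj2.symm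
        have hdeg' : ∀ w ∈ A.erase v, ∃ d1 d2 : E × Fin 2, d1 ≠ d2 ∧
            dartVert ends' d1 = w ∧ dartVert ends' d2 = w := by
          intro w hw
          obtain ⟨hwv, hwA⟩ := Finset.mem_erase.mp hw
          obtain ⟨c1, c2, hc12, hc1, hc2⟩ := hdeg w hwA
          set φ : E × Fin 2 → E × Fin 2 :=
            fun d => if d.1 = e1 then (e2, 0) else if d.1 = e2 then (e2, 1) else d with hφ
          set ψ : E × Fin 2 → E × Fin 2 :=
            fun d => if d.1 = e2 then (if d.2 = 0 then (e1, j1) else (e2, j2)) else d with hψ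
          have hφw : ∀ c : E × Fin 2, dartVert ends c = w → dartVert ends' (φ c) = w := by
            rintro ⟨ce, ci⟩ hc
            by_cases h1 : ce = e1
            · subst h1
              have h2 : ci = j1 := huniq1 w hwv ci hc
              subst h2
              have hwa : a = w := by rw [ha]; exact hc
              simp [hφ, dartVert, hE2, hwa]
            · by_cases h2 : ce = e2
              · subst h2
                have h3 : ci = j2 := huniq2 w hwv ci hc
                subst h3
                have hwb : b = w := by rw [hb]; exact hc
                simp [hφ, h1, dartVert, hE2, hwb]
              · simpa [hφ, h1, h2, dartVert, hEo ce h1 h2] using hc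
          have hψφ : ∀ c : E × Fin 2, dartVert ends c = w → ψ (φ c) = c := by
            rintro ⟨ce, ci⟩ hc
            by_cases h1 : ce = e1
            · subst h1
              have h2 : ci = j1 := huniq1 w hwv ci hc
              subst h2
              simp [hφ, hψ]
            · by_cases h2 : ce = e2
              · subst h2
                have h3 : ci = j2 := huniq2 w hwv ci hc
                subst h3
                simp [hφ, hψ, h1]
              · simp [hφ, hψ, h1, h2]
          refine ⟨φ c1, φ c2, ?_, hφw c1 hc1, hφw c2 hc2⟩
          intro h
          exact hc12 (by rw [← hψφ c1 hc1, ← hψφ c2 hc2, h])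
        obtain ⟨σ', hσ'⟩ := ih ends' (A.erase v) hAe hdeg'
        set val := σ' e2 with hval
        set x1 : Bool := if j1 = 0 then val else !val with hx1
        set x2 : Bool := if j2 = 0 then !val else val with hx2
        set σ := Function.update (Function.update σ' e1 x1) e2 x2 with hσdef
        have hσe1 : σ e1 = x1 := by
          rw [hσdef, Function.update_of_ne hee, Function.update_self]
        have hσe2 : σ e2 = x2 := by rw [hσdef, Function.update_self]
        have hσo : ∀ e, e ≠ e1 → e ≠ e2 → σ e = σ' e := by
          intro e he1 he2
          rw [hσdef, Function.update_of_ne he2, Function.update_of_ne he1]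
        have hcol1 : dcolor σ (e1, j1) = val := by
          rcases fin2_eq_or j1 0 with h | h
          · simp [dcolor, h, hσe1, hx1]
          · have h' : j1 = 1 := by rw [h]; decide
            simp [dcolor, h', hσe1, hx1]
        have hcol2 : dcolor σ (e2, j2) = !val := by
          rcases fin2_eq_or j2 0 with h | h
          · simp [dcolor, h, hσe2, hx2]
          · have h' : j2 = 1 := by rw [h]; decide
            simp [dcolor, h', hσe2, hx2]
        have hcolv1 : dcolor σ (e1, i1) = !val := by
          have hh := dcolor_oth σ e1 i1
          rw [← hj1, hcol1] at hh
          rw [hh, Bool.not_not]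
        have hcolv2 : dcolor σ (e2, i2) = val := by
          have hh := dcolor_oth σ e2 i2
          rw [← hj2, hcol2] at hh
          have hh2 := congrArg Bool.not hh
          simp only [Bool.not_not] at hh2
          exact hh2.symm
        have T2 : ∀ w, w ≠ v → ∀ d' : E × Fin 2, dartVert ends' d' = w →
            ∃ dd : E × Fin 2, dartVert ends dd = w ∧ dcolor σ dd = dcolor σ' d' := by
          rintro w hwv ⟨e, i⟩ hd'
          by_cases h1 : e = e1
          · exfalso
            rw [show dartVert ends' (e, i) = v by simp [dartVert, h1, hE1]] at hd'
            exact hwv hd'.symm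
          · by_cases h2 : e = e2
            · rcases fin2_eq_or i 0 with hi | hi
              · rw [show dartVert ends' (e, i) = a by simp [dartVert, h2, hi, hE2]] at hd'
                refine ⟨(e1, j1), by rw [← ha]; exact hd', ?_⟩
                rw [hcol1]
                simp [dcolor, h2, hi, hval]
              · have hi' : i = 1 := by rw [hi]; decide
                rw [show dartVert ends' (e, i) = b by simp [dartVert, h2, hi', hE2]] at hd'
                refine ⟨(e2, j2), by rw [← hb]; exact hd', ?_⟩
                rw [hcol2]
                simp [dcolor, h2, hi', hval]
            · refine ⟨(e, i), ?_, ?_⟩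
              · rw [show dartVert ends (e, i) = dartVert ends' (e, i) by
                  simp [dartVert, hEo e h1 h2]]
                exact hd'
              · simp [dcolor, hσo e h1 h2]
        refine ⟨σ, fun w hw => ?_⟩
        by_cases hwv : w = v
        · subst hwv
          rcases Bool.eq_false_or_eq_true val with h | h
          · exact ⟨⟨(e2, i2), h2v, by rw [hcolv2, h]⟩,
              ⟨(e1, i1), h1v, by rw [hcolv1, h]; decide⟩⟩
          · exact ⟨⟨(e1, i1), h1v, by rw [hcolv1, h]; decide⟩,
              ⟨(e2, i2), h2v, by rw [hcolv2, h]⟩⟩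
        · obtain ⟨⟨dt, hdt, hct⟩, ⟨df, hdf, hcf⟩⟩ :=
            hσ' w (Finset.mem_erase.mpr ⟨hwv, hw⟩)
          obtain ⟨ddt, hddt, hcolt⟩ := T2 w hwv dt hdt
          obtain ⟨ddf, hddf, hcolf⟩ := T2 w hwv df hdf
          exact ⟨⟨ddt, hddt, hcolt.trans hct⟩, ⟨ddf, hddf, hcolf.trans hcf⟩⟩

lemma mono_step {V E : Type*} (ends : E → V × V) (σ : E → Bool) {u x : E × Fin 2}
    (h : (monoSubgraph (truncation ends) (dcolor σ)).Adj u x) :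
    dartVert ends u = dartVert ends x ∧ dcolor σ u = dcolor σ x := by
  obtain ⟨⟨hne, hor⟩, hc⟩ := h
  refine ⟨?_, hc⟩
  rcases hor with h | h
  · exact h
  · exfalso
    obtain ⟨e, i⟩ := u
    obtain ⟨e', i'⟩ := x
    have he : e = e' := h
    subst he
    have hii : i ≠ i' := by
      intro hh; exact hne (by rw [hh])
    have h2 : i = oth i' := (fin2_eq_or i i').resolve_left hii
    subst h2
    rw [dcolor_oth] at hc
    simp at hc

lemma mono_reach {V E : Type*} (ends : E → V × V) (σ : E → Bool) {u w : E × Fin 2}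
    (h : (monoSubgraph (truncation ends) (dcolor σ)).Reachable u w) :
    dartVert ends w = dartVert ends u ∧ dcolor σ w = dcolor σ u := by
  obtain ⟨p⟩ := h
  induction p with
  | nil => exact ⟨rfl, rfl⟩
  | cons hadj p ih =>
      obtain ⟨h1, h2⟩ := mono_step ends σ hadj
      exact ⟨ih.1.trans h1.symm, ih.2.trans h2.symm⟩

end TwoBisectionAux

/-- The truncation of a bridgeless cubic multigraph admits a 2-bisection. -/
theorem truncation_two_bisection {V E : Type*} [Fintype V] [Fintype E]
    (ends : E → V × V) (hcubic : MCubic ends) (hbridgeless : MBridgeless ends) :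
    ∃ c : E × Fin 2 → Bool, IsKBisection (truncation ends) c 2 := by
  classical
  have hdeg : ∀ v ∈ (Finset.univ : Finset V), ∃ d1 d2 : E × Fin 2, d1 ≠ d2 ∧
      dartVert ends d1 = v ∧ dartVert ends d2 = v := by
    intro v _
    have h3 := hcubic v
    have h1 : 1 < {d : E × Fin 2 | dartVert ends d = v}.ncard := by omega
    rw [Set.one_lt_ncard (Set.toFinite _)] at h1
    obtain ⟨d1, hd1, d2, hd2, h12⟩ := h1
    exact ⟨d1, d2, h12, hd1, hd2⟩
  obtain ⟨σ, hσ⟩ := TwoBisectionAux.exists_nae (Finset.univ : Finset V).card ends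
    Finset.univ rfl hdeg
  refine ⟨TwoBisectionAux.dcolor σ, ?_, ?_⟩
  · -- balance
    have hinj : Function.Injective
        (fun d : E × Fin 2 => (d.1, TwoBisectionAux.oth d.2)) := by
      intro p q h
      obtain ⟨pe, pi⟩ := p; obtain ⟨qe, qi⟩ := q
      simp only [Prod.mk.injEq] at h
      obtain ⟨h1, h2⟩ := h
      have : pi = qi := by
        have := congrArg TwoBisectionAux.oth h2
        rwa [TwoBisectionAux.oth_oth, TwoBisectionAux.oth_oth] at this
      rw [h1, this]
    have himg : (fun d : E × Fin 2 => (d.1, TwoBisectionAux.oth d.2)) ''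
        {d | TwoBisectionAux.dcolor σ d = true} =
        {d | TwoBisectionAux.dcolor σ d = false} := by
      ext d
      constructor
      · rintro ⟨⟨e, i⟩, hx, rfl⟩
        simp only [Set.mem_setOf_eq] at hx ⊢
        rw [TwoBisectionAux.dcolor_oth, hx]
        rfl
      · intro hd
        refine ⟨(d.1, TwoBisectionAux.oth d.2), ?_, ?_⟩
        · simp only [Set.mem_setOf_eq] at hd ⊢
          rw [TwoBisectionAux.dcolor_oth, hd]
          rfl
        · simp [TwoBisectionAux.oth_oth]
    rw [← himg, Set.ncard_image_of_injective _ hinj]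
  · -- components have at most two darts
    intro d
    have key : ∀ dbad : E × Fin 2, dartVert ends dbad = dartVert ends d →
        TwoBisectionAux.dcolor σ dbad ≠ TwoBisectionAux.dcolor σ d →
        {w | (monoSubgraph (truncation ends) (TwoBisectionAux.dcolor σ)).Reachable d w}.ncard ≤ 2 := by
      intro dbad hbv hbc
      have hsub : {w | (monoSubgraph (truncation ends) (TwoBisectionAux.dcolor σ)).Reachable d w} ⊆
          {d' : E × Fin 2 | dartVert ends d' = dartVert ends d} \ {dbad} := by
        intro w hw
        obtain ⟨hw1, hw2⟩ := TwoBisectionAux.mono_reach ends σ hw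
        refine ⟨hw1, ?_⟩
        intro h
        rw [Set.mem_singleton_iff] at h
        subst h
        exact hbc hw2
      calc {w | (monoSubgraph (truncation ends) (TwoBisectionAux.dcolor σ)).Reachable d w}.ncard
          ≤ ({d' : E × Fin 2 | dartVert ends d' = dartVert ends d} \ {dbad}).ncard :=
            Set.ncard_le_ncard hsub (Set.toFinite _)
        _ = {d' : E × Fin 2 | dartVert ends d' = dartVert ends d}.ncard - 1 :=
            Set.ncard_diff_singleton_of_mem (s := {d' : E × Fin 2 | dartVert ends d' = dartVert ends d}) hbv
        _ ≤ 2 := by rw [hcubic (dartVert ends d)]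
    obtain ⟨⟨dt, hdt, hct⟩, ⟨df, hdf, hcf⟩⟩ := hσ (dartVert ends d) (Finset.mem_univ _)
    rcases Bool.eq_false_or_eq_true (TwoBisectionAux.dcolor σ d) with h | h
    · exact key df hdf (by rw [hcf, h]; simp)
    · exact key dt hdt (by rw [hct, h]; simp)
end

section
/- Let G be obtained from a graph H' admitting a 2-bisection by replacing some edges of H' (edges not lying in monochromatic components of size 2 need no restriction; any edges may be replaced) with strings of diamonds. Then G admits a 2-bisection. -/
open SimpleGraph Finset

/-- Vertex type of the graph obtained from a graph on `V` by replacing each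
(oriented) edge `p ∈ R` by a string of `k p` diamonds. -/
def StringVert {V : Type*} (R : Finset (V × V)) (k : V × V → ℕ) : Type _ :=
  V ⊕ (Σ p : {p : V × V // p ∈ R}, Fin (k p.1) × Fin 4)

/-- One direction of the adjacency relation of the diamond-string replacement:
original edges not in `R` survive; the edge `p = (u,v) ∈ R` is replaced by the
string `D₁,…,D_{k p}`, joining `u` to vertex `0` of `D₁`, vertex `1` of `Dᵢ` to
vertex `0` of `Dᵢ₊₁`, and vertex `1` of `D_{k p}` to `v`. -/
def stringRel {V : Type*} (H : SimpleGraph V) (R : Finset (V × V)) (k : V × V → ℕ) :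
    StringVert R k → StringVert R k → Prop
  | Sum.inl u, Sum.inl v => H.Adj u v ∧ (u, v) ∉ R ∧ (v, u) ∉ R
  | Sum.inl u, Sum.inr ⟨p, i, j⟩ =>
      (u = p.1.1 ∧ i.val = 0 ∧ j = 0) ∨ (u = p.1.2 ∧ i.val = k p.1 - 1 ∧ j = 1)
  | Sum.inr _, Sum.inl _ => False
  | Sum.inr ⟨p, i, j⟩, Sum.inr ⟨q, i', j'⟩ =>
      p = q ∧ ((i.val = i'.val ∧ diamondGraph.Adj j j') ∨
        (i'.val = i.val + 1 ∧ j = 1 ∧ j' = 0))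

/-- The graph obtained from `H` by replacing each edge in `R` by a string of
diamonds. -/
def stringGraph {V : Type*} (H : SimpleGraph V) (R : Finset (V × V)) (k : V × V → ℕ) :
    SimpleGraph (StringVert R k) where
  Adj x y := x ≠ y ∧ (stringRel H R k x y ∨ stringRel H R k y x)
  symm := ⟨fun x y h => ⟨h.1.symm, h.2.symm⟩⟩
  loopless := ⟨fun x h => h.1 rfl⟩

section Aux

def dcol (a b : Bool) : Fin 4 → Bool := ![a, b, !a, !b]

def pairFin (a b : Bool) (j : Fin 4) : Fin 4 :=
  if a = b then ![0, 1, 3, 2] j else ![3, 2, 1, 0] j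

lemma diamond_adj_iff (i j : Fin 4) : diamondGraph.Adj i j ↔
    ¬(i = j ∨ (i = 0 ∧ j = 1) ∨ (i = 1 ∧ j = 0)) := by
  fin_cases i <;> fin_cases j <;>
    simp [diamondGraph, Sym2.eq, Sym2.rel_iff', Prod.ext_iff, Prod.swap]

lemma pair_unique (a b : Bool) (j j' : Fin 4) (hadj : diamondGraph.Adj j j')
    (hc : dcol a b j = dcol a b j') : j' = pairFin a b j := by
  rw [diamond_adj_iff] at hadj
  revert hc hadj; revert j j' a b; decide

lemma pair_invol (a b : Bool) (j : Fin 4) : pairFin a b (pairFin a b j) = j := by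
  revert j a b; decide

lemma dcol_flip (a b : Bool) (j : Fin 4) : dcol a b (j + 2) = !dcol a b j := by
  revert j a b; decide

lemma add_two_invol (j : Fin 4) : j + 2 + 2 = j := by revert j; decide

variable {V : Type*} [Fintype V] [DecidableEq V]

variable (R : Finset (V × V)) (k : V × V → ℕ)

instance : Fintype (StringVert R k) :=
  inferInstanceAs (Fintype (V ⊕ (Σ p : {p : V × V // p ∈ R}, Fin (k p.1) × Fin 4)))

variable {R k}

/-- The extended colouring. -/
def extColor (c : V → Bool) (x : StringVert R k) : Bool :=
  Sum.elim c
    (fun q : (Σ p : {p : V × V // p ∈ R}, Fin (k p.1) × Fin 4) =>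
      dcol (!c q.1.1.1) (if q.2.1.val = k q.1.1 - 1 then !c q.1.1.2 else c q.1.1.1) q.2.2) x

lemma extColor_inl (c : V → Bool) (v : V) :
    extColor c (Sum.inl v : StringVert R k) = c v := rfl

lemma extColor_inr (c : V → Bool) (p : {p : V × V // p ∈ R}) (i : Fin (k p.1)) (j : Fin 4) :
    extColor c (Sum.inr ⟨p, i, j⟩ : StringVert R k) =
      dcol (!c p.1.1) (if i.val = k p.1 - 1 then !c p.1.2 else c p.1.1) j := rfl

/-- A walk stays in a set closed under adjacency. -/
lemma reach_mem_of_closed {W : Type*} {G : SimpleGraph W} {S : Set W}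
    (hS : ∀ x y, G.Adj x y → x ∈ S → y ∈ S) {x y : W} (hx : x ∈ S)
    (h : G.Reachable x y) : y ∈ S := by
  obtain ⟨w⟩ := h
  induction w with
  | nil => exact hx
  | cons h p ih => exact ih (hS _ _ h hx)

end Aux


section Main
variable {V : Type*} [Fintype V] [DecidableEq V]
variable {H : SimpleGraph V} {R : Finset (V × V)} {k : V × V → ℕ} {c : V → Bool}

lemma mono_adj_inl (u : V) (y : StringVert R k)
    (h : (monoSubgraph (stringGraph H R k) (extColor c)).Adj (Sum.inl u) y) :
    ∃ w, y = Sum.inl w ∧ (monoSubgraph H c).Adj u w := by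
  obtain ⟨⟨hne, hrel⟩, hcol⟩ := h
  obtain (w | ⟨p, i, j⟩) := y
  · refine ⟨w, rfl, ?_, hcol⟩
    rcases hrel with h | h
    · exact h.1
    · exact h.1.symm
  · exfalso
    rw [extColor_inl, extColor_inr] at hcol
    rcases hrel with (⟨h1, h2, h3⟩ | ⟨h1, h2, h3⟩) | h
    · subst h1 h3
      simp [dcol] at hcol
    · subst h1 h3
      rw [if_pos h2] at hcol
      simp [dcol] at hcol
    · exact h.elim
lemma mono_adj_inr (p : {p : V × V // p ∈ R}) (i : Fin (k p.1)) (j : Fin 4)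
    (y : StringVert R k)
    (h : (monoSubgraph (stringGraph H R k) (extColor c)).Adj (Sum.inr ⟨p, i, j⟩) y) :
    y = Sum.inr ⟨p, i,
      pairFin (!c p.1.1) (if i.val = k p.1 - 1 then !c p.1.2 else c p.1.1) j⟩ := by
  obtain ⟨⟨hne, hrel⟩, hcol⟩ := h
  obtain (w | ⟨q, i', j'⟩) := y
  · exfalso
    rw [extColor_inr, extColor_inl] at hcol
    rcases hrel with h | (⟨h1, h2, h3⟩ | ⟨h1, h2, h3⟩)
    · exact h.elim
    · subst h1 h3
      simp [dcol] at hcol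
    · subst h1 h3
      rw [if_pos h2] at hcol
      simp [dcol] at hcol
  · rw [extColor_inr, extColor_inr] at hcol
    rcases hrel with ⟨hpq, hh⟩ | ⟨hpq, hh⟩
    · subst hpq
      rcases hh with ⟨hii, hadj⟩ | ⟨hii, h1, h0⟩
      · have : i = i' := Fin.ext hii
        subst this
        rw [pair_unique _ _ _ _ hadj hcol]
      · exfalso
        subst h1 h0
        have hne' : i.val ≠ k p.1 - 1 := by have := i'.isLt; omega
        rw [if_neg hne'] at hcol
        simp [dcol] at hcol
    · subst hpq
      rcases hh with ⟨hii, hadj⟩ | ⟨hii, h1, h0⟩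
      · have : i = i' := Fin.ext hii.symm
        subst this
        rw [pair_unique _ _ _ _ hadj.symm hcol]
      · exfalso
        subst h1 h0
        have hne' : i'.val ≠ k q.1 - 1 := by have := i.isLt; omega
        rw [if_neg hne'] at hcol
        simp [dcol] at hcol


end Main


/-- If `H'` admits a 2-bisection, then the graph obtained from `H'` by
replacing any set of edges by strings of diamonds admits a 2-bisection. -/
theorem stringGraph_two_bisection {V : Type*} [Fintype V] [DecidableEq V]
    (H : SimpleGraph V) (R : Finset (V × V)) (k : V × V → ℕ)
    (hR : ∀ p ∈ R, H.Adj p.1 p.2) (hRsym : ∀ p ∈ R, (p.2, p.1) ∉ R)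
    (hk : ∀ p ∈ R, 1 ≤ k p)
    (hH : ∃ c : V → Bool, IsKBisection H c 2) :
    ∃ c : StringVert R k → Bool, IsKBisection (stringGraph H R k) c 2 := by
  classical
  obtain ⟨c, hbal, hcomp⟩ := hH
  refine ⟨extColor c, ?_, ?_⟩
  · -- balance
    set g : (Σ p : {p : V × V // p ∈ R}, Fin (k p.1) × Fin 4) → Bool :=
      fun q => extColor c (Sum.inr q : StringVert R k) with hg
    set f : (Σ p : {p : V × V // p ∈ R}, Fin (k p.1) × Fin 4) →
        (Σ p : {p : V × V // p ∈ R}, Fin (k p.1) × Fin 4) :=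
      fun q => ⟨q.1, q.2.1, q.2.2 + 2⟩ with hf
    have hflip : ∀ q, g (f q) = !g q := by
      rintro ⟨p, i, j⟩
      show extColor c (Sum.inr ⟨p, i, j + 2⟩ : StringVert R k) =
        !extColor c (Sum.inr ⟨p, i, j⟩ : StringVert R k)
      rw [extColor_inr, extColor_inr, dcol_flip]
    have hfinv : ∀ q, f (f q) = q := by
      rintro ⟨p, i, j⟩
      simp [hf, add_two_invol]
    have hfinj : Function.Injective f := by
      intro a b hab
      rw [← hfinv a, hab, hfinv]
    have himg : f '' {q | g q = true} = {q | g q = false} := by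
      ext q
      constructor
      · rintro ⟨r, hr, rfl⟩
        simp only [Set.mem_setOf_eq] at hr ⊢
        rw [hflip, hr]; rfl
      · intro hq
        simp only [Set.mem_setOf_eq] at hq
        exact ⟨f q, by simp only [Set.mem_setOf_eq, hflip, hq]; rfl, hfinv q⟩
    have hsplit : ∀ b : Bool, {x : StringVert R k | extColor c x = b} =
        ((Sum.inl '' {v | c v = b}) : Set (StringVert R k)) ∪ (Sum.inr '' {q | g q = b}) := by
      intro b
      ext x
      simp only [Set.mem_setOf_eq, Set.mem_union, Set.mem_image]
      constructor
      · intro h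
        obtain (v | q) := x
        · exact Or.inl ⟨v, h, rfl⟩
        · exact Or.inr ⟨q, h, rfl⟩
      · rintro (⟨v, hv, rfl⟩ | ⟨q, hq, rfl⟩)
        · exact hv
        · exact hq
    have hdisj : ∀ b : Bool, Disjoint
        ((Sum.inl '' {v | c v = b}) : Set (StringVert R k)) (Sum.inr '' {q | g q = b}) := by
      intro b
      rw [Set.disjoint_left]
      rintro x ⟨v, _, rfl⟩ ⟨q, _, h⟩
      exact Sum.inl_ne_inr h.symm
    have hcount : ∀ b : Bool, {x : StringVert R k | extColor c x = b}.ncard =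
        {v | c v = b}.ncard + {q | g q = b}.ncard := by
      intro b
      rw [hsplit b, Set.ncard_union_eq (hdisj b) (Set.toFinite _) (Set.toFinite _)]
      exact congrArg₂ (· + ·) (Set.ncard_image_of_injective _ Sum.inl_injective)
        (Set.ncard_image_of_injective _ Sum.inr_injective)
    rw [hcount true, hcount false, hbal, ← himg,
      Set.ncard_image_of_injective _ hfinj]
  · -- component bound
    intro x
    obtain (v | ⟨p, i, j⟩) := x
    · set S : Set (StringVert R k) :=
        Sum.inl '' {w | (monoSubgraph H c).Reachable v w} with hS
      have hclosed : ∀ a b : StringVert R k,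
          (monoSubgraph (stringGraph H R k) (extColor c)).Adj a b → a ∈ S → b ∈ S := by
        rintro a b hab ⟨u, hu, rfl⟩
        obtain ⟨w, rfl, hadj⟩ := mono_adj_inl u b hab
        exact ⟨w, hu.trans hadj.reachable, rfl⟩
      have hsub : {w | (monoSubgraph (stringGraph H R k) (extColor c)).Reachable
          (Sum.inl v) w} ⊆ S :=
        fun y hy => reach_mem_of_closed hclosed ⟨v, SimpleGraph.Reachable.refl v, rfl⟩ hy
      calc {w | (monoSubgraph (stringGraph H R k) (extColor c)).Reachable
            (Sum.inl v) w}.ncard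
          ≤ S.ncard := Set.ncard_le_ncard hsub (Set.toFinite _)
        _ = {w | (monoSubgraph H c).Reachable v w}.ncard :=
            Set.ncard_image_of_injective _ Sum.inl_injective
        _ ≤ 2 := hcomp v
    · set x : StringVert R k := Sum.inr ⟨p, i, j⟩ with hx
      set px : StringVert R k := Sum.inr ⟨p, i,
        pairFin (!c p.1.1) (if i.val = k p.1 - 1 then !c p.1.2 else c p.1.1) j⟩ with hpx
      have hclosed : ∀ a b : StringVert R k,
          (monoSubgraph (stringGraph H R k) (extColor c)).Adj a b →
          a ∈ ({x, px} : Set (StringVert R k)) → b ∈ ({x, px} : Set (StringVert R k)) := by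
        rintro a b hab (rfl | rfl)
        · have hb := mono_adj_inr p i j b hab
          rw [← hpx] at hb
          exact Set.mem_insert_iff.mpr (Or.inr hb)
        · rw [hpx] at hab
          have hb := mono_adj_inr p i _ b hab
          rw [pair_invol] at hb
          exact Set.mem_insert_iff.mpr (Or.inl (hb.trans hx.symm))
      have hsub : {w | (monoSubgraph (stringGraph H R k) (extColor c)).Reachable x w}
          ⊆ ({x, px} : Set (StringVert R k)) :=
        fun y hy => reach_mem_of_closed hclosed (Set.mem_insert x _) hy
      refine le_trans (Set.ncard_le_ncard hsub (Set.toFinite _)) ?_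
      refine le_trans (Set.ncard_insert_le x {px}) ?_
      simp
end

section
/- Every bridgeless cubic multigraph has a perfect matching. -/
open SimpleGraph Finset

namespace PetersenAux

open Finset
open scoped Classical

variable {V : Type*}

/-- step relation within a finset `A` -/
def rstep (r : V → V → Prop) (A : Finset V) (x y : V) : Prop := r x y ∧ x ∈ A ∧ y ∈ A

/-- reachability within `A` -/
def rreach (r : V → V → Prop) (A : Finset V) : V → V → Prop :=
  Relation.ReflTransGen (rstep r A)

noncomputable def comp (r : V → V → Prop) (A : Finset V) (u : V) : Finset V :=
  A.filter (fun v => rreach r A u v)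

noncomputable def comps (r : V → V → Prop) (A : Finset V) : Finset (Finset V) :=
  A.image (comp r A)

noncomputable def oddComps (r : V → V → Prop) (A : Finset V) : ℕ :=
  ((comps r A).filter fun C => Odd C.card).card

variable {r : V → V → Prop} {A B C D : Finset V} {u v x y : V}

lemma rreach_trans (h1 : rreach r A u v) (h2 : rreach r A v x) : rreach r A u x :=
  Relation.ReflTransGen.trans h1 h2

lemma rreach_symm (hs : Symmetric r) (h : rreach r A u v) : rreach r A v u :=
  by haveI : Std.Symm (rstep r A) := ⟨fun _ _ hxy => ⟨hs hxy.1, hxy.2.2, hxy.2.1⟩⟩; exact (Relation.ReflTransGen.stdSymm (r := rstep r A)).symm _ _ h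

lemma mem_comp_self (hu : u ∈ A) : u ∈ comp r A u := by
  simp only [comp, mem_filter]
  exact ⟨hu, Relation.ReflTransGen.refl⟩

lemma comp_subset : comp r A u ⊆ A := filter_subset _ _

lemma mem_comp_iff : v ∈ comp r A u ↔ v ∈ A ∧ rreach r A u v := by
  simp [comp]

lemma comp_eq_of_mem (hs : Symmetric r) (h : v ∈ comp r A u) : comp r A v = comp r A u := by
  rw [mem_comp_iff] at h
  ext w
  simp only [mem_comp_iff]
  exact ⟨fun hw => ⟨hw.1, rreach_trans h.2 hw.2⟩,
    fun hw => ⟨hw.1, rreach_trans (rreach_symm hs h.2) hw.2⟩⟩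

lemma comp_nonempty (hC : C ∈ comps r A) : C.Nonempty := by
  obtain ⟨u, hu, rfl⟩ := mem_image.mp hC
  exact ⟨u, mem_comp_self hu⟩

lemma comps_disjoint (hs : Symmetric r) (hC : C ∈ comps r A) (hD : D ∈ comps r A)
    (hne : C ≠ D) : Disjoint C D := by
  obtain ⟨u, hu, rfl⟩ := mem_image.mp hC
  obtain ⟨w, hw, rfl⟩ := mem_image.mp hD
  rw [Finset.disjoint_left]
  intro a haC haD
  exact hne ((comp_eq_of_mem hs haC).symm.trans (comp_eq_of_mem hs haD))

/-- fibers of `comp r A` over `A` are the components themselves -/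
lemma fiber_eq (hs : Symmetric r) (hC : C ∈ comps r A) :
    A.filter (fun a => comp r A a = C) = C := by
  obtain ⟨u, hu, rfl⟩ := mem_image.mp hC
  ext a
  simp only [mem_filter]
  constructor
  · rintro ⟨ha, h⟩
    rw [← h]; exact mem_comp_self ha
  · intro ha
    exact ⟨comp_subset ha, comp_eq_of_mem hs ha⟩

lemma card_eq_sum_comps (hs : Symmetric r) : A.card = ∑ C ∈ comps r A, C.card := by
  rw [card_eq_sum_card_fiberwise (f := comp r A) (fun a ha => mem_image_of_mem _ ha)]
  exact Finset.sum_congr rfl fun C hC => by rw [fiber_eq hs hC]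

lemma sum_mod_two {ι : Type*} (s : Finset ι) (g : ι → ℕ) :
    (∑ i ∈ s, g i) % 2 = (s.filter (fun i => Odd (g i))).card % 2 := by
  induction s using Finset.induction with
  | empty => simp
  | @insert a s ha ih =>
    rw [Finset.sum_insert ha, Finset.filter_insert]
    by_cases h : Odd (g a)
    · rw [if_pos h, Finset.card_insert_of_notMem (fun hc => ha (Finset.mem_of_mem_filter _ hc))]
      obtain ⟨k, hk⟩ := h
      omega
    · rw [if_neg h]
      rw [Nat.not_odd_iff_even] at h
      obtain ⟨k, hk⟩ := h
      omega

lemma oddComps_mod_two (hs : Symmetric r) : oddComps r A % 2 = A.card % 2 := by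
  rw [card_eq_sum_comps (A := A) hs, sum_mod_two]
  rfl

/-- `C` is closed in `B`: subset and no `r`-edges leave `C` into `B`. -/
def Closed (r : V → V → Prop) (B C : Finset V) : Prop :=
  C ⊆ B ∧ ∀ x ∈ C, ∀ y ∈ B, r x y → y ∈ C

lemma rreach_closed (hcl : Closed r B C) (hu : u ∈ C) (h : rreach r B u v) :
    v ∈ C ∧ rreach r C u v := by
  induction h with
  | refl => exact ⟨hu, Relation.ReflTransGen.refl⟩
  | tail _ hstep ih =>
    rename_i b c _
    have hbC : b ∈ C := ih.1
    have hcC : c ∈ C := hcl.2 b hbC c hstep.2.2 hstep.1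
    exact ⟨hcC, ih.2.tail ⟨hstep.1, hbC, hcC⟩⟩

lemma comp_of_closed (hcl : Closed r B C) (hu : u ∈ C) : comp r B u = comp r C u := by
  ext w
  simp only [mem_comp_iff]
  constructor
  · intro hw
    have := rreach_closed hcl hu hw.2
    exact ⟨this.1, this.2⟩
  · intro hw
    exact ⟨hcl.1 hw.1, Relation.ReflTransGen.mono (fun x y hxy => ⟨hxy.1, hcl.1 hxy.2.1, hcl.1 hxy.2.2⟩) _ _ hw.2⟩

lemma comp_is_own (hs : Symmetric r) (hC : C ∈ comps r A) (hu : u ∈ C) :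
    comp r C u = C := by
  have hclosed : Closed r A C := by
    obtain ⟨w, hw, rfl⟩ := mem_image.mp hC
    refine ⟨comp_subset, fun x hx y hy hxy => ?_⟩
    rw [mem_comp_iff] at hx ⊢
    exact ⟨hy, hx.2.tail ⟨hxy, hx.1, hy⟩⟩
  rw [← comp_of_closed hclosed hu]
  obtain ⟨w, hw, rfl⟩ := mem_image.mp hC
  exact comp_eq_of_mem hs hu

lemma comps_self (hs : Symmetric r) (hC : C ∈ comps r A) : comps r C = {C} := by
  have hne := comp_nonempty hC
  apply Finset.eq_singleton_iff_nonempty_unique_mem.mpr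
  refine ⟨by
    obtain ⟨u, hu⟩ := hne
    exact ⟨comp r C u, mem_image_of_mem _ hu⟩, ?_⟩
  · intro D hD
    obtain ⟨u, hu, rfl⟩ := mem_image.mp hD
    exact comp_is_own hs hC hu

lemma oddComps_of_component (hs : Symmetric r) (hC : C ∈ comps r A) :
    oddComps r C = if Odd C.card then 1 else 0 := by
  rw [oddComps, comps_self hs hC]
  by_cases h : Odd C.card <;> simp [Finset.filter_singleton, h]

/-- splitting: if `B = C ∪ D` disjointly with no edges between, comps add up -/
lemma comps_union (hs : Symmetric r) (hdisj : Disjoint C D)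
    (hsep : ∀ x ∈ C, ∀ y ∈ D, ¬ r x y) :
    comps r (C ∪ D) = comps r C ∪ comps r D := by
  have hclC : Closed r (C ∪ D) C := by
    refine ⟨subset_union_left, fun x hx y hy hxy => ?_⟩
    rcases mem_union.mp hy with h | h
    · exact h
    · exact absurd hxy (hsep x hx y h)
  have hclD : Closed r (C ∪ D) D := by
    refine ⟨subset_union_right, fun x hx y hy hxy => ?_⟩
    rcases mem_union.mp hy with h | h
    · exact absurd (hs hxy) (hsep y h x hx)
    · exact h
  ext X
  simp only [comps, mem_union, mem_image]
  constructor
  · rintro ⟨u, hu, rfl⟩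
    rcases hu with h | h
    · exact Or.inl ⟨u, h, (comp_of_closed hclC h).symm⟩
    · exact Or.inr ⟨u, h, (comp_of_closed hclD h).symm⟩
  · rintro (⟨u, hu, rfl⟩ | ⟨u, hu, rfl⟩)
    · exact ⟨u, Or.inl hu, comp_of_closed hclC hu⟩
    · exact ⟨u, Or.inr hu, comp_of_closed hclD hu⟩

lemma oddComps_union (hs : Symmetric r) (hdisj : Disjoint C D)
    (hsep : ∀ x ∈ C, ∀ y ∈ D, ¬ r x y) :
    oddComps r (C ∪ D) = oddComps r C + oddComps r D := by
  rw [oddComps, comps_union hs hdisj hsep, filter_union]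
  rw [oddComps, oddComps]
  apply card_union_of_disjoint
  rw [Finset.disjoint_left]
  intro X hX hX'
  have h1 : X ∈ comps r C := mem_of_mem_filter _ hX
  have h2 : X ∈ comps r D := mem_of_mem_filter _ hX'
  obtain ⟨a, ha⟩ := comp_nonempty h1
  have haC : a ∈ C := by
    obtain ⟨u, hu, rfl⟩ := mem_image.mp h1; exact comp_subset ha
  have haD : a ∈ D := by
    obtain ⟨u, hu, rfl⟩ := mem_image.mp h2; exact comp_subset ha
  exact (Finset.disjoint_left.mp hdisj) haC haD


lemma comps_subset_ground (hC : C ∈ comps r B) : C ⊆ B := by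
  obtain ⟨u, hu, rfl⟩ := mem_image.mp hC
  exact comp_subset

lemma comp_eq_of_mem_comps (hs : Symmetric r) (hC : C ∈ comps r B) (hw : v ∈ C) :
    comp r B v = C := by
  obtain ⟨u, hu, rfl⟩ := mem_image.mp hC
  exact comp_eq_of_mem hs hw

lemma comps_closed (hs : Symmetric r) (hC : C ∈ comps r B) : Closed r B C := by
  obtain ⟨u, hu, rfl⟩ := mem_image.mp hC
  refine ⟨comp_subset, fun x hx y hy hxy => ?_⟩
  rw [mem_comp_iff] at hx ⊢
  exact ⟨hy, hx.2.tail ⟨hxy, hx.1, hy⟩⟩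

theorem tutteRel (hs : Symmetric r) :
    ∀ (n : ℕ) (A : Finset V), A.card ≤ n →
      (∀ S ⊆ A, oddComps r (A \ S) ≤ S.card) →
      ∃ f : V → V, ∀ a ∈ A, f a ∈ A ∧ r a (f a) ∧ f (f a) = a := by
  intro n
  induction n with
  | zero =>
    intro A hA _
    rw [Nat.le_zero, card_eq_zero] at hA
    subst hA
    exact ⟨id, fun a ha => absurd ha (notMem_empty a)⟩
  | succ n ih =>
    intro A hcard htutte
    rcases A.eq_empty_or_nonempty with rfl | hAne
    · exact ⟨id, fun a ha => absurd ha (notMem_empty a)⟩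
    -- |A| is even
    have hA0 : oddComps r A = 0 := by
      have := htutte ∅ (empty_subset A)
      simpa using this
    have hAeven : A.card % 2 = 0 := by
      have := oddComps_mod_two (A := A) hs
      omega
    -- the collection of "equality sets" is nonempty
    obtain ⟨v₀, hv₀⟩ := hAne
    have hsingle : oddComps r (A \ {v₀}) = 1 := by
      have hle := htutte {v₀} (singleton_subset_iff.mpr hv₀)
      have hcard1 : (A \ {v₀}).card = A.card - 1 := by
        rw [sdiff_singleton_eq_erase, card_erase_of_mem hv₀]
      have hmod := oddComps_mod_two (A := A \ {v₀}) hs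
      have hA1 : 1 ≤ A.card := card_pos.mpr ⟨v₀, hv₀⟩
      simp only [card_singleton] at hle
      omega
    -- pick a maximal equality set S
    obtain ⟨S, hSmem, hSmax⟩ := Finset.exists_max_image
      ((A.powerset).filter (fun S => oddComps r (A \ S) = S.card)) card
      ⟨{v₀}, by
        simp only [mem_filter, mem_powerset]
        exact ⟨singleton_subset_iff.mpr hv₀, by rw [hsingle, card_singleton]⟩⟩
    simp only [mem_filter, mem_powerset] at hSmem
    obtain ⟨hSA, hSeq⟩ := hSmem
    have hSmax' : ∀ S' ⊆ A, oddComps r (A \ S') = S'.card → S'.card ≤ S.card := by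
      intro S' h1 h2
      exact hSmax S' (by simp only [mem_filter, mem_powerset]; exact ⟨h1, h2⟩)
    set B := A \ S with hBdef
    -- every component of B is odd
    have allodd : ∀ C ∈ comps r B, Odd C.card := by
      intro C hC
      by_contra hodd
      obtain ⟨u, hu⟩ := comp_nonempty hC
      have hCB : C ⊆ B := comps_subset_ground hC
      have huB : u ∈ B := hCB hu
      have hcl := comps_closed hs hC
      have hsep : ∀ x ∈ C, ∀ y ∈ B \ C, ¬ r x y := by
        intro x hx y hy hxy
        exact (mem_sdiff.mp hy).2 (hcl.2 x hx y (mem_sdiff.mp hy).1 hxy)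
      have hsplit : oddComps r B = oddComps r C + oddComps r (B \ C) := by
        rw [← oddComps_union hs (disjoint_sdiff) hsep, union_sdiff_of_subset hCB]
      have hC0 : oddComps r C = 0 := by
        rw [oddComps_of_component hs hC, if_neg hodd]
      -- now remove u
      have hrest : oddComps r (B \ C) = S.card := by omega
      have huS : u ∉ S := (mem_sdiff.mp huB).2
      have hS' : insert u S ⊆ A := insert_subset (mem_sdiff.mp huB).1 hSA
      have hsd : A \ insert u S = (B \ C) ∪ C.erase u := by
        ext a
        simp only [hBdef, mem_sdiff, mem_insert, mem_union, mem_erase, not_or]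
        constructor
        · rintro ⟨haA, hau, haS⟩
          by_cases haC : a ∈ C
          · exact Or.inr ⟨hau, haC⟩
          · exact Or.inl ⟨⟨haA, haS⟩, haC⟩
        · rintro (⟨⟨haA, haS⟩, haC⟩ | ⟨hau, haC⟩)
          · refine ⟨haA, fun hau => haC (hau ▸ hu), haS⟩
          · have := mem_sdiff.mp (hCB haC)
            exact ⟨this.1, hau, this.2⟩
      have hsep2 : ∀ x ∈ B \ C, ∀ y ∈ C.erase u, ¬ r x y :=
        fun x hx y hy hxy => hsep y (mem_of_mem_erase hy) x hx (hs hxy)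
      have hdisj2 : Disjoint (B \ C) (C.erase u) :=
        Finset.sdiff_disjoint.mono_right (erase_subset _ _)
      have herase_odd : 1 ≤ oddComps r (C.erase u) := by
        have hmod := oddComps_mod_two (A := C.erase u) hs
        have hce : (C.erase u).card = C.card - 1 := card_erase_of_mem hu
        have hcpos : 1 ≤ C.card := card_pos.mpr ⟨u, hu⟩
        rw [Nat.not_odd_iff_even] at hodd
        obtain ⟨k, hk⟩ := hodd
        omega
      have hbig : oddComps r (A \ insert u S) = oddComps r (B \ C) + oddComps r (C.erase u) := by
        rw [hsd]; exact oddComps_union hs hdisj2 hsep2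
      have hle := htutte (insert u S) hS'
      have hcardins : (insert u S).card = S.card + 1 := card_insert_of_notMem huS
      have heq : oddComps r (A \ insert u S) = (insert u S).card := by omega
      have := hSmax' (insert u S) hS' heq
      omega
    -- component count equals |S|
    have hcomps_card : (comps r B).card = S.card := by
      have h1 : (comps r B).filter (fun C => Odd C.card) = comps r B :=
        filter_true_of_mem allodd
      have h2 := hSeq
      rw [oddComps, h1] at h2
      exact h2
    have hSne : S.Nonempty := by
      rcases S.eq_empty_or_nonempty with rfl | h
      · exfalso
        have hBA : B = A := by simp [hBdef]
        have : comp r B v₀ ∈ comps r B := mem_image_of_mem _ (hBA ▸ hv₀)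
        have := card_pos.mpr ⟨_, this⟩
        simp [hcomps_card] at this
      · exact h
    -- Hall's condition
    set ι := {C : Finset V // C ∈ comps r B} with hι
    set t : ι → Finset V := fun C => S.filter (fun s => ∃ x ∈ C.1, r x s) with ht
    have hHall : ∀ s : Finset ι, s.card ≤ (s.biUnion t).card := by
      intro s
      set S₀ := s.biUnion t with hS₀
      have hS₀S : S₀ ⊆ S := biUnion_subset.mpr fun C _ => filter_subset _ _
      have key : ∀ C ∈ s, C.1 ∈ (comps r (A \ S₀)).filter (fun C => Odd C.card) := by
        intro C hCs
        have hCsub : C.1 ⊆ A \ S₀ := by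
          intro x hx
          have hxB := comps_subset_ground C.2 hx
          rw [mem_sdiff] at hxB ⊢
          exact ⟨hxB.1, fun hc => hxB.2 (hS₀S hc)⟩
        have hcl : Closed r (A \ S₀) C.1 := by
          refine ⟨hCsub, fun x hx y hy hxy => ?_⟩
          by_cases hyS : y ∈ S
          · exfalso
            have hyt : y ∈ t C := mem_filter.mpr ⟨hyS, ⟨x, hx, hxy⟩⟩
            have : y ∈ S₀ := mem_biUnion.mpr ⟨C, hCs, hyt⟩
            exact (mem_sdiff.mp hy).2 this
          · have hyB : y ∈ B := mem_sdiff.mpr ⟨(mem_sdiff.mp hy).1, hyS⟩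
            exact (comps_closed hs C.2).2 x hx y hyB hxy
        obtain ⟨u, hu⟩ := comp_nonempty C.2
        have hmem : C.1 ∈ comps r (A \ S₀) := by
          have h1 : comp r (A \ S₀) u = comp r C.1 u := comp_of_closed hcl hu
          have h2 : comp r C.1 u = C.1 := comp_is_own hs C.2 hu
          exact mem_image.mpr ⟨u, hCsub hu, h1.trans h2⟩
        exact mem_filter.mpr ⟨hmem, allodd C.1 C.2⟩
      calc s.card = (s.image Subtype.val).card :=
            (card_image_of_injective s Subtype.val_injective).symm
        _ ≤ ((comps r (A \ S₀)).filter (fun C => Odd C.card)).card := by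
            apply card_le_card
            intro X hX
            obtain ⟨C, hCs, rfl⟩ := mem_image.mp hX
            exact key C hCs
        _ = oddComps r (A \ S₀) := rfl
        _ ≤ S₀.card := htutte S₀ (hS₀S.trans hSA)
    obtain ⟨f₀, hf₀inj, hf₀mem⟩ := (Finset.all_card_le_biUnion_card_iff_exists_injective t).mp hHall
    have hf₀S : ∀ C : ι, f₀ C ∈ S := fun C => filter_subset _ _ (hf₀mem C)
    have hxp : ∀ C : ι, ∃ x, x ∈ C.1 ∧ r x (f₀ C) := by
      intro C
      have := mem_filter.mp (hf₀mem C)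
      obtain ⟨x, hx, hrx⟩ := this.2
      exact ⟨x, hx, hrx⟩
    choose xp hxpC hxpr using hxp
    haveI : Nonempty ι := by
      have : 0 < (comps r B).card := by rw [hcomps_card]; exact card_pos.mpr hSne
      obtain ⟨C, hC⟩ := card_pos.mp this
      exact ⟨⟨C, hC⟩⟩
    have hιcard : Fintype.card ι = S.card := by
      have h := Fintype.card_coe (comps r B)
      rw [hcomps_card] at h
      exact h
    have himg : Finset.univ.image f₀ = S := by
      apply eq_of_subset_of_card_le
      · intro x hx
        obtain ⟨C, _, rfl⟩ := mem_image.mp hx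
        exact hf₀S C
      · rw [card_image_of_injective _ hf₀inj, card_univ, hιcard]

    have hsurj : ∀ s' ∈ S, ∃ C : ι, f₀ C = s' := by
      intro s' hs'
      rw [← himg] at hs'
      obtain ⟨C, _, hC⟩ := mem_image.mp hs'
      exact ⟨C, hC⟩
    choose! τ hτ using hsurj
    -- Tutte condition for each reduced component
    have hACtutte : ∀ C : ι, ∀ T ⊆ C.1.erase (xp C),
        oddComps r (C.1.erase (xp C) \ T) ≤ T.card := by
      intro C T hT
      by_contra hlt
      push_neg at hlt
      have hxpmem : xp C ∈ C.1 := hxpC C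
      have hCB : C.1 ⊆ B := comps_subset_ground C.2
      have hCodd : Odd C.1.card := allodd C.1 C.2
      have hTC : T ⊆ C.1 := hT.trans (erase_subset _ _)
      have hxT : xp C ∉ T := fun hc => (mem_erase.mp (hT hc)).1 rfl
      -- parity forces oddComps ≥ T.card + 2
      have hcard1 : (C.1.erase (xp C) \ T).card = C.1.card - 1 - T.card := by
        rw [card_sdiff_of_subset hT, card_erase_of_mem hxpmem]
      have hmod := oddComps_mod_two (A := C.1.erase (xp C) \ T) hs
      have hTle : T.card ≤ C.1.card - 1 := by
        have := card_le_card hT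
        rw [card_erase_of_mem hxpmem] at this
        exact this
      obtain ⟨k, hk⟩ := hCodd
      have hge2 : oddComps r (C.1.erase (xp C) \ T) ≥ T.card + 2 := by omega
      -- build the bigger equality set
      set S' := insert (xp C) S ∪ T with hS'def
      have hS'A : S' ⊆ A := by
        apply union_subset
        · exact insert_subset (mem_sdiff.mp (hCB hxpmem)).1 hSA
        · exact fun x hx => (mem_sdiff.mp (hCB (hTC hx))).1
      have hTS : ∀ x ∈ T, x ∉ S := fun x hx => (mem_sdiff.mp (hCB (hTC hx))).2
      have hxpS : xp C ∉ S := (mem_sdiff.mp (hCB hxpmem)).2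
      have hS'card : S'.card = S.card + 1 + T.card := by
        rw [hS'def, card_union_of_disjoint, card_insert_of_notMem hxpS]
        rw [Finset.disjoint_right]
        intro x hxT'
        simp only [mem_insert]
        push_neg
        exact ⟨fun hc => (mem_erase.mp (hT hxT')).1 hc, hTS x hxT'⟩
      have hsd : A \ S' = (B \ C.1) ∪ (C.1.erase (xp C) \ T) := by
        ext a
        simp only [hS'def, hBdef, mem_sdiff, mem_union, mem_insert, mem_erase, not_or]
        constructor
        · rintro ⟨haA, ⟨hax, haS⟩, haT⟩
          by_cases haC : a ∈ C.1
          · exact Or.inr ⟨⟨hax, haC⟩, haT⟩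
          · exact Or.inl ⟨⟨haA, haS⟩, haC⟩
        · rintro (⟨⟨haA, haS⟩, haC⟩ | ⟨⟨hax, haC⟩, haT⟩)
          · exact ⟨haA, ⟨fun hc => haC (hc ▸ hxpmem), haS⟩, fun hc => haC (hTC hc)⟩
          · have := mem_sdiff.mp (hCB haC)
            exact ⟨this.1, ⟨hax, this.2⟩, haT⟩
      have hcl := comps_closed hs C.2
      have hsep3 : ∀ x ∈ B \ C.1, ∀ y ∈ C.1.erase (xp C) \ T, ¬ r x y := by
        intro x hx y hy hxy
        have hyC : y ∈ C.1 := mem_of_mem_erase (mem_sdiff.mp hy).1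
        exact (mem_sdiff.mp hx).2 (hcl.2 y hyC x (mem_sdiff.mp hx).1 (hs hxy))
      have hdisj3 : Disjoint (B \ C.1) (C.1.erase (xp C) \ T) := by
        apply Finset.sdiff_disjoint.mono_right
        exact (sdiff_subset).trans (erase_subset _ _)
      have hBsplit : oddComps r (B \ C.1) = S.card - 1 := by
        have hsep : ∀ x ∈ C.1, ∀ y ∈ B \ C.1, ¬ r x y := by
          intro x hx y hy hxy
          exact (mem_sdiff.mp hy).2 (hcl.2 x hx y (mem_sdiff.mp hy).1 hxy)
        have hsplit : oddComps r B = oddComps r C.1 + oddComps r (B \ C.1) := by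
          rw [← oddComps_union hs (disjoint_sdiff) hsep, union_sdiff_of_subset hCB]
        have hC1 : oddComps r C.1 = 1 := by
          rw [oddComps_of_component hs C.2, if_pos (allodd C.1 C.2)]
        omega
      have hABsum : oddComps r (A \ S') = oddComps r (B \ C.1) + oddComps r (C.1.erase (xp C) \ T) := by
        rw [hsd]; exact oddComps_union hs hdisj3 hsep3
      have hle := htutte S' hS'A
      have hSge1 : 1 ≤ S.card := card_pos.mpr hSne
      have heq : oddComps r (A \ S') = S'.card := by omega
      have := hSmax' S' hS'A heq
      omega
    have hACcard : ∀ C : ι, (C.1.erase (xp C)).card ≤ n := by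
      intro C
      have h1 : C.1.erase (xp C) ⊆ B := (erase_subset _ _).trans (comps_subset_ground C.2)
      have h2 : (C.1.erase (xp C)).card ≤ B.card := card_le_card h1
      have h3 : B.card = A.card - S.card := card_sdiff_of_subset hSA
      have h4 : 1 ≤ S.card := card_pos.mpr hSne
      have h5 : S.card ≤ A.card := card_le_card hSA
      omega
    have hIH : ∀ C : ι, ∃ g : V → V, ∀ a ∈ C.1.erase (xp C),
        g a ∈ C.1.erase (xp C) ∧ r a (g a) ∧ g (g a) = a :=
      fun C => ih _ (hACcard C) (hACtutte C)
    choose g hg using hIH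
    -- assemble the matching
    refine ⟨fun v => if v ∈ S then xp (τ v) else if hv : v ∈ B then
      (if v = xp ⟨comp r B v, mem_image_of_mem _ hv⟩ then f₀ ⟨comp r B v, mem_image_of_mem _ hv⟩
       else g ⟨comp r B v, mem_image_of_mem _ hv⟩ v) else v, ?_⟩
    intro a ha
    beta_reduce
    by_cases haS : a ∈ S
    · -- a is in S, matched to xp (τ a)
      have hfa : f₀ (τ a) = a := hτ a haS
      set x := xp (τ a) with hxdef
      have hx1 : x ∈ (τ a).1 := hxpC (τ a)
      have hxB : x ∈ B := comps_subset_ground (τ a).2 hx1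
      have hxS : x ∉ S := (mem_sdiff.mp hxB).2
      have hrax : r a x := by
        have := hxpr (τ a)
        rw [hfa] at this
        exact hs this
      have hcompx : comp r B x = (τ a).1 := comp_eq_of_mem_comps hs (τ a).2 hx1
      have hFa : (if a ∈ S then xp (τ a) else if hv : a ∈ B then
          (if a = xp ⟨comp r B a, mem_image_of_mem _ hv⟩ then f₀ ⟨comp r B a, mem_image_of_mem _ hv⟩
           else g ⟨comp r B a, mem_image_of_mem _ hv⟩ a) else a) = x := by
        rw [if_pos haS]
      rw [hFa]
      refine ⟨(mem_sdiff.mp hxB).1, hrax, ?_⟩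
      rw [if_neg hxS, dif_pos hxB]
      have hsub : (⟨comp r B x, mem_image_of_mem _ hxB⟩ : ι) = τ a := Subtype.ext hcompx
      rw [hsub, if_pos rfl, hfa]
    · have haB : a ∈ B := mem_sdiff.mpr ⟨ha, haS⟩
      set C : ι := ⟨comp r B a, mem_image_of_mem _ haB⟩ with hCdef
      have haC : a ∈ C.1 := mem_comp_self haB
      by_cases hax : a = xp C
      · -- a is the picked vertex, matched to f₀ C ∈ S
        have hFa : (if a ∈ S then xp (τ a) else if hv : a ∈ B then
            (if a = xp ⟨comp r B a, mem_image_of_mem _ hv⟩ then f₀ ⟨comp r B a, mem_image_of_mem _ hv⟩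
             else g ⟨comp r B a, mem_image_of_mem _ hv⟩ a) else a) = f₀ C := by
          rw [if_neg haS, dif_pos haB, if_pos hax]
        rw [hFa]
        have hfS : f₀ C ∈ S := hf₀S C
        refine ⟨hSA hfS, ?_, ?_⟩
        · have := hxpr C
          rw [← hax] at this
          exact this
        · rw [if_pos hfS]
          have : τ (f₀ C) = C := hf₀inj (hτ (f₀ C) hfS)
          rw [this, ← hax]
      · -- a is matched within its component by g C
        have haAC : a ∈ C.1.erase (xp C) := mem_erase.mpr ⟨hax, haC⟩
        obtain ⟨hb1, hb2, hb3⟩ := hg C a haAC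
        set b := g C a with hbdef
        have hbC : b ∈ C.1 := mem_of_mem_erase hb1
        have hbB : b ∈ B := comps_subset_ground C.2 hbC
        have hbS : b ∉ S := (mem_sdiff.mp hbB).2
        have hFa : (if a ∈ S then xp (τ a) else if hv : a ∈ B then
            (if a = xp ⟨comp r B a, mem_image_of_mem _ hv⟩ then f₀ ⟨comp r B a, mem_image_of_mem _ hv⟩
             else g ⟨comp r B a, mem_image_of_mem _ hv⟩ a) else a) = b := by
          rw [if_neg haS, dif_pos haB, if_neg hax]
        rw [hFa]
        refine ⟨mem_sdiff.mp hbB |>.1, hb2, ?_⟩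
        rw [if_neg hbS, dif_pos hbB]
        have hcompb : comp r B b = C.1 := comp_eq_of_mem_comps hs C.2 hbC
        have hsub : (⟨comp r B b, mem_image_of_mem _ hbB⟩ : ι) = C := Subtype.ext hcompb
        rw [hsub, if_neg (mem_erase.mp hb1).1, hb3]

end PetersenAux

namespace PetersenAux

open scoped Classical
open Finset

variable {V E : Type*} [Fintype V] [Fintype E] (ends : E → V × V)

/-- the adjacency relation of the multigraph -/
def mrel (ends : E → V × V) (u v : V) : Prop :=
  u ≠ v ∧ ∃ e, ends e = (u, v) ∨ ends e = (v, u)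

lemma mrel_symm : Symmetric (mrel ends) := by
  rintro u v ⟨hne, e, he⟩
  exact ⟨hne.symm, e, he.symm⟩

lemma dartVert_zero (e : E) : dartVert ends (e, 0) = (ends e).1 := by
  simp [dartVert]

lemma dartVert_one (e : E) : dartVert ends (e, 1) = (ends e).2 := by
  simp [dartVert]

noncomputable def dartsTo (C : Finset V) : Finset (E × Fin 2) :=
  univ.filter (fun d => dartVert ends d ∈ C)

lemma cubic_filter (hcubic : MCubic ends) (v : V) :
    (univ.filter (fun d : E × Fin 2 => dartVert ends d = v)).card = 3 := by
  have h := hcubic v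
  rw [Set.ncard_eq_toFinset_card'] at h
  rw [← h]
  congr 1
  ext d
  simp

lemma dartsTo_card (hcubic : MCubic ends) (C : Finset V) :
    (dartsTo ends C).card = 3 * C.card := by
  unfold dartsTo
  rw [card_eq_sum_card_fiberwise (f := dartVert ends) (s := univ.filter (fun d => dartVert ends d ∈ C)) (t := C)
    (fun d hd => (mem_filter.mp (Finset.mem_coe.mp hd)).2)]
  have h : ∀ v ∈ C, ((univ.filter (fun d : E × Fin 2 => dartVert ends d ∈ C)).filter
      (fun d => dartVert ends d = v)).card = 3 := by
    intro v hv
    rw [← cubic_filter ends hcubic v]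
    congr 1
    ext d
    simp only [mem_filter, mem_univ, true_and]
    constructor
    · rintro ⟨_, h⟩; exact h
    · intro h; exact ⟨h.symm ▸ hv, h⟩
  rw [Finset.sum_congr rfl h, Finset.sum_const, smul_eq_mul, mul_comm]

/-- boundary edges of a vertex set -/
noncomputable def bdry (C : Finset V) : Finset E :=
  univ.filter (fun e => ((ends e).1 ∈ C ∧ (ends e).2 ∉ C) ∨ ((ends e).1 ∉ C ∧ (ends e).2 ∈ C))

lemma edge_fiber_card (C : Finset V) (e : E) :
    ((dartsTo ends C).filter (fun d => d.1 = e)).card =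
      (if (ends e).1 ∈ C then 1 else 0) + (if (ends e).2 ∈ C then 1 else 0) := by
  have himg : (dartsTo ends C).filter (fun d => d.1 = e) =
      ((univ : Finset (Fin 2)).filter (fun i => dartVert ends (e, i) ∈ C)).image
        (fun i => (e, i)) := by
    ext d
    simp only [dartsTo, mem_filter, mem_univ, true_and, mem_image]
    constructor
    · rintro ⟨hvert, h1⟩
      exact ⟨d.2, by rw [show (e, d.2) = d from Prod.ext h1.symm rfl]; exact hvert, Prod.ext h1.symm rfl⟩
    · rintro ⟨i, hi, rfl⟩
      exact ⟨hi, rfl⟩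
  rw [himg, card_image_of_injective _ (fun i j h => (Prod.ext_iff.mp h).2),
    Finset.card_filter]
  rw [Fin.sum_univ_two]
  rw [dartVert_zero, dartVert_one]

lemma bdry_parity (hcubic : MCubic ends) (C : Finset V) :
    (bdry ends C).card % 2 = C.card % 2 := by
  have h1 : (dartsTo ends C).card = ∑ e : E,
      ((if (ends e).1 ∈ C then 1 else 0) + (if (ends e).2 ∈ C then 1 else 0)) := by
    rw [card_eq_sum_card_fiberwise (f := fun d => d.1) (fun d _ => mem_univ d.1)]
    exact Finset.sum_congr rfl (fun e _ => edge_fiber_card ends C e)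
  have h2 := sum_mod_two (univ : Finset E)
    (fun e => (if (ends e).1 ∈ C then 1 else 0) + (if (ends e).2 ∈ C then 1 else 0))
  have h3 : (univ : Finset E).filter (fun e =>
      Odd ((if (ends e).1 ∈ C then 1 else 0) + (if (ends e).2 ∈ C then 1 else 0))) =
      bdry ends C := by
    ext e
    simp only [mem_filter, mem_univ, true_and, bdry]
    by_cases hf : (ends e).1 ∈ C <;> by_cases hsnd : (ends e).2 ∈ C <;>
      simp [hf, hsnd] <;> decide
  rw [h3] at h2
  have h4 := dartsTo_card ends hcubic C
  omega

lemma comps_vert_closed {S : Finset V} {C : Finset V}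
    (hC : C ∈ comps (mrel ends) (univ \ S)) :
    ∀ x ∈ C, ∀ y, y ∉ S → mrel ends x y → y ∈ C := by
  intro x hx y hyS hxy
  exact (comps_closed (mrel_symm ends) hC).2 x hx y (mem_sdiff.mpr ⟨mem_univ y, hyS⟩) hxy

/-- boundary edges of a component all have the other end in S -/
lemma bdry_other_end {S : Finset V} {C : Finset V}
    (hC : C ∈ comps (mrel ends) (univ \ S)) {e : E} (he : e ∈ bdry ends C) :
    ((ends e).1 ∈ C → (ends e).2 ∈ S) ∧ ((ends e).2 ∈ C → (ends e).1 ∈ S) := by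
  simp only [bdry, mem_filter, mem_univ, true_and] at he
  constructor
  · intro h1
    by_contra h2
    rcases he with ⟨_, hn2⟩ | ⟨hn1, _⟩
    · have hne : (ends e).1 ≠ (ends e).2 := fun hc => hn2 (hc ▸ h1)
      have : (ends e).2 ∈ C := comps_vert_closed ends hC _ h1 _ h2
        ⟨hne, e, Or.inl (Prod.ext rfl rfl)⟩
      exact hn2 this
    · exact hn1 h1
  · intro h1
    by_contra h2
    rcases he with ⟨_, hn2⟩ | ⟨hn1, _⟩
    · exact hn2 h1
    · have hne : (ends e).2 ≠ (ends e).1 := fun hc => hn1 (hc ▸ h1)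
      have : (ends e).1 ∈ C := comps_vert_closed ends hC _ h1 _ h2
        ⟨hne, e, Or.inr (Prod.ext rfl rfl)⟩
      exact hn1 this

/-- a component of odd size has at least 3 boundary edges (using bridgelessness) -/
lemma bdry_ne_one (hbridgeless : MBridgeless ends) {S : Finset V} {C : Finset V}
    (hC : C ∈ comps (mrel ends) (univ \ S)) (h1 : (bdry ends C).card = 1) : False := by
  obtain ⟨e₀, he₀⟩ := card_eq_one.mp h1
  have he₀mem : e₀ ∈ bdry ends C := he₀ ▸ mem_singleton_self e₀
  simp only [bdry, mem_filter, mem_univ, true_and] at he₀mem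
  -- x : the end in C, y : the end not in C
  obtain ⟨x, y, hxC, hyC, hxy⟩ : ∃ x y, x ∈ C ∧ y ∉ C ∧
      (ends e₀ = (x, y) ∨ ends e₀ = (y, x)) := by
    rcases he₀mem with ⟨ha, hb⟩ | ⟨ha, hb⟩
    · exact ⟨(ends e₀).1, (ends e₀).2, ha, hb, Or.inl (Prod.ext rfl rfl)⟩
    · exact ⟨(ends e₀).2, (ends e₀).1, hb, ha, Or.inr (Prod.ext rfl rfl)⟩
  have hreach : MReach ends Set.univ x y :=
    Relation.ReflTransGen.single ⟨e₀, Set.mem_univ e₀, hxy⟩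
  have h2 := hbridgeless e₀ x y hreach
  -- but reachability avoiding e₀ stays inside C
  have hstay : ∀ v, MReach ends {e | e ≠ e₀} x v → v ∈ C := by
    intro v hv
    induction hv with
    | refl => exact hxC
    | tail _ hstep ih =>
      rename_i b c _
      obtain ⟨e, hee₀, hends⟩ := hstep
      by_cases hbc : b = c
      · exact hbc ▸ ih
      · -- e is not a boundary edge of C
        have hnotbdry : e ∉ bdry ends C := by
          rw [he₀]
          simpa using hee₀
        simp only [bdry, mem_filter, mem_univ, true_and, not_or, not_and, not_not] at hnotbdry
        rcases hends with h | h
        · have hb1 : (ends e).1 = b := by rw [h]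
          have hc1 : (ends e).2 = c := by rw [h]
          rw [← hc1]
          exact hnotbdry.1 (hb1 ▸ ih)
        · have hb1 : (ends e).2 = b := by rw [h]
          have hc1 : (ends e).1 = c := by rw [h]
          rw [← hc1]
          by_contra hc
          exact hnotbdry.2 hc (hb1 ▸ ih)
  exact hyC (hstay y h2)


lemma fin_two (i : Fin 2) : i = 0 ∨ i = 1 := by
  rcases i with ⟨iv, hi⟩
  interval_cases iv
  · exact Or.inl rfl
  · exact Or.inr rfl

theorem mtutte_cond (hcubic : MCubic ends) (hbridgeless : MBridgeless ends)
    (S : Finset V) : oddComps (mrel ends) (univ \ S) ≤ S.card := by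
  set r := mrel ends with hr
  set 𝒪 := (comps r (univ \ S)).filter (fun C => Odd C.card) with h𝒪
  have hb3 : ∀ C ∈ 𝒪, 3 ≤ (bdry ends C).card := by
    intro C hC
    have hCcomp : C ∈ comps r (univ \ S) := mem_of_mem_filter _ hC
    have hodd : Odd C.card := (mem_filter.mp hC).2
    have hpar := bdry_parity ends hcubic C
    have hne1 : (bdry ends C).card ≠ 1 := fun h => bdry_ne_one ends hbridgeless hCcomp h
    obtain ⟨k, hk⟩ := hodd
    omega
  set sd : Finset V → Finset (E × Fin 2) := fun C =>
    univ.filter (fun d => d.1 ∈ bdry ends C ∧ dartVert ends d ∉ C) with hsd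
  have hsd3 : ∀ C ∈ 𝒪, 3 ≤ (sd C).card := by
    intro C hC
    refine le_trans (hb3 C hC) ?_
    apply Finset.card_le_card_of_injOn
      (fun e => ((e : E), if (ends e).1 ∈ C then (1 : Fin 2) else 0))
    · intro e he
      simp only [Finset.mem_coe, hsd, mem_filter, mem_univ, true_and]
      have hb := he
      simp only [Finset.mem_coe, bdry, mem_filter, mem_univ, true_and] at hb
      by_cases h1 : (ends e).1 ∈ C
      · rw [if_pos h1]
        refine ⟨he, ?_⟩
        rw [dartVert_one]
        rcases hb with ⟨_, h2⟩ | ⟨h2, _⟩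
        · exact h2
        · exact absurd h1 h2
      · rw [if_neg h1]
        exact ⟨he, by rw [dartVert_zero]; exact h1⟩
    · intro e1 _ e2 _ h
      exact (Prod.ext_iff.mp h).1
  have hdisj : ∀ C ∈ 𝒪, ∀ C' ∈ 𝒪, C ≠ C' → Disjoint (sd C) (sd C') := by
    intro C hC C' hC' hne
    rw [Finset.disjoint_left]
    intro d hd hd'
    simp only [hsd, mem_filter, mem_univ, true_and] at hd hd'
    have hother : ∀ (D : Finset V), d.1 ∈ bdry ends D → dartVert ends d ∉ D →
        dartVert ends (d.1, if d.2 = 0 then 1 else 0) ∈ D := by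
      intro D hb hv
      simp only [bdry, mem_filter, mem_univ, true_and] at hb
      by_cases h0 : d.2 = 0
      · have hveq : dartVert ends d = (ends d.1).1 := by simp [dartVert, h0]
        rw [hveq] at hv
        rw [if_pos h0, dartVert_one]
        rcases hb with ⟨h1, _⟩ | ⟨_, h2⟩
        · exact absurd h1 hv
        · exact h2
      · have hveq : dartVert ends d = (ends d.1).2 := by simp [dartVert, h0]
        rw [hveq] at hv
        rw [if_neg h0, dartVert_zero]
        rcases hb with ⟨h1, h2⟩ | ⟨h1, h2⟩
        · exact h1
        · exact absurd h2 hv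
    have hc1 := hother C hd.1 hd.2
    have hc2 := hother C' hd'.1 hd'.2
    have hdis := comps_disjoint (mrel_symm ends) (mem_of_mem_filter _ hC)
      (mem_of_mem_filter _ hC') hne
    exact (Finset.disjoint_left.mp hdis) hc1 hc2
  have hsub : ∀ C ∈ 𝒪, sd C ⊆ dartsTo ends S := by
    intro C hC d hd
    simp only [hsd, mem_filter, mem_univ, true_and] at hd
    have hCcomp := mem_of_mem_filter _ hC
    have hoe := bdry_other_end ends hCcomp hd.1
    simp only [dartsTo, mem_filter, mem_univ, true_and]
    have hb := hd.1
    simp only [bdry, mem_filter, mem_univ, true_and] at hb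
    by_cases h0 : d.2 = 0
    · have hv : dartVert ends d = (ends d.1).1 := by simp [dartVert, h0]
      rw [hv]
      rw [hv] at hd
      rcases hb with ⟨h1, _⟩ | ⟨_, h2⟩
      · exact absurd h1 hd.2
      · exact hoe.2 h2
    · have hv : dartVert ends d = (ends d.1).2 := by simp [dartVert, h0]
      rw [hv]
      rw [hv] at hd
      rcases hb with ⟨h1, _⟩ | ⟨_, h2⟩
      · exact hoe.1 h1
      · exact absurd h2 hd.2
  have hbiU : (𝒪.biUnion sd).card = ∑ C ∈ 𝒪, (sd C).card := card_biUnion hdisj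
  have hsum : 𝒪.card * 3 ≤ ∑ C ∈ 𝒪, (sd C).card := by
    calc 𝒪.card * 3 = ∑ _C ∈ 𝒪, 3 := by rw [Finset.sum_const, smul_eq_mul]
      _ ≤ _ := Finset.sum_le_sum hsd3
  have hup : (𝒪.biUnion sd).card ≤ (dartsTo ends S).card :=
    card_le_card (biUnion_subset.mpr hsub)
  have hS3 := dartsTo_card ends hcubic S
  show 𝒪.card ≤ S.card
  omega

theorem mpm_exists (hcubic : MCubic ends) (hbridgeless : MBridgeless ends) :
    ∃ M : Set E, MPerfectMatching ends M := by
  obtain ⟨F, hF⟩ := tutteRel (mrel_symm ends) (Fintype.card V) univ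
    (by rw [card_univ]) (fun S _ => mtutte_cond ends hcubic hbridgeless S)
  have hFr : ∀ v, mrel ends v (F v) := fun v => (hF v (mem_univ v)).2.1
  have hFF : ∀ v, F (F v) = v := fun v => (hF v (mem_univ v)).2.2
  set ρ := (Fintype.equivFin V) with hρ
  have hpe : ∀ v, ∃ e : E, ends e = (v, F v) ∨ ends e = (F v, v) := fun v => (hFr v).2
  choose pe hpeSpec using hpe
  refine ⟨{e | ∃ v, (ρ v ≤ ρ (F v)) ∧ pe v = e}, ?_⟩
  intro v
  set w := F v with hw
  have hvw : v ≠ w := (hFr v).1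
  have hFw : F w = v := hFF v
  have hρne : ρ v ≠ ρ w := fun h => hvw (ρ.injective h)
  set u₀ := if ρ v ≤ ρ w then v else w with hu₀
  have hu₀le : ρ u₀ ≤ ρ (F u₀) := by
    by_cases h : ρ v ≤ ρ w
    · rw [hu₀, if_pos h, ← hw]; exact h
    · rw [hu₀, if_neg h, hFw]; exact le_of_not_ge h
  set estar := pe u₀ with hestar
  have hends : ends estar = (v, w) ∨ ends estar = (w, v) := by
    by_cases h : ρ v ≤ ρ w
    · have : u₀ = v := by rw [hu₀, if_pos h]
      rw [hestar, this]
      exact hpeSpec v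
    · have : u₀ = w := by rw [hu₀, if_neg h]
      rw [hestar, this]
      rcases hpeSpec w with h' | h' <;> rw [hFw] at h'
      · exact Or.inr h'
      · exact Or.inl h'
  have hMe : estar ∈ {e | ∃ v, (ρ v ≤ ρ (F v)) ∧ pe v = e} := ⟨u₀, hu₀le, rfl⟩
  set dstar : E × Fin 2 := if (ends estar).1 = v then (estar, 0) else (estar, 1) with hdstar
  have hseteq : {d : E × Fin 2 | d.1 ∈ {e | ∃ v, (ρ v ≤ ρ (F v)) ∧ pe v = e} ∧
      dartVert ends d = v} = {dstar} := by
    ext d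
    simp only [Set.mem_setOf_eq, Set.mem_singleton_iff]
    constructor
    · rintro ⟨⟨u, hule, hpeu⟩, hdv⟩
      -- first show d.1 = estar
      have huins : v = u ∨ v = F u := by
        rcases fin_two d.2 with h0 | h1
        · have : dartVert ends d = (ends d.1).1 := by simp [dartVert, h0]
          rw [this, ← hpeu] at hdv
          rcases hpeSpec u with h' | h' <;> rw [h'] at hdv
          · exact Or.inl hdv.symm
          · exact Or.inr hdv.symm
        · have : dartVert ends d = (ends d.1).2 := by simp [dartVert, h1]
          rw [this, ← hpeu] at hdv
          rcases hpeSpec u with h' | h' <;> rw [h'] at hdv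
          · exact Or.inr hdv.symm
          · exact Or.inl hdv.symm
      have hu_eq : u = u₀ := by
        rcases huins with rfl | hvFu
        · rw [hu₀, if_pos (by rw [← hw] at hule; exact hule)]
        · have huw : u = w := by
            rw [hw, hvFu, hFF u]
          subst huw
          rw [hFw] at hule
          have hnle : ¬ (ρ v ≤ ρ w) := by
            intro h
            exact hρne (le_antisymm h hule)
          rw [hu₀, if_neg hnle]
      have hd1 : d.1 = estar := by rw [← hpeu, hu_eq, hestar]
      -- now pin down the dart
      rcases hends with hcase | hcase
      · have hfst : (ends estar).1 = v := by rw [hcase]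
        rw [hdstar, if_pos hfst]
        rcases fin_two d.2 with h0 | h1
        · exact Prod.ext hd1 h0
        · exfalso
          have : dartVert ends d = (ends d.1).2 := by simp [dartVert, h1]
          rw [this, hd1, hcase] at hdv
          exact hvw hdv.symm
      · have hfst : (ends estar).1 ≠ v := by rw [hcase]; exact fun h => hvw h.symm
        rw [hdstar, if_neg hfst]
        rcases fin_two d.2 with h0 | h1
        · exfalso
          have : dartVert ends d = (ends d.1).1 := by simp [dartVert, h0]
          rw [this, hd1, hcase] at hdv
          exact hvw hdv.symm
        · exact Prod.ext hd1 h1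
    · rintro rfl
      rcases hends with hcase | hcase
      · have hfst : (ends estar).1 = v := by rw [hcase]
        rw [hdstar, if_pos hfst]
        exact ⟨hMe, by rw [dartVert_zero]; exact hfst⟩
      · have hfst : (ends estar).1 ≠ v := by rw [hcase]; exact fun h => hvw h.symm
        rw [hdstar, if_neg hfst]
        refine ⟨hMe, ?_⟩
        rw [dartVert_one, hcase]
  rw [hseteq]
  exact Set.ncard_singleton dstar

end PetersenAux

/-- **Petersen's theorem.** Every bridgeless cubic multigraph has a perfect
matching. -/
theorem bridgeless_cubic_perfect_matching {V E : Type*} [Fintype V] [Fintype E]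
    (ends : E → V × V) (hcubic : MCubic ends) (hbridgeless : MBridgeless ends) :
    ∃ M : Set E, MPerfectMatching ends M :=
  PetersenAux.mpm_exists ends hcubic hbridgeless
end

section
/- Every cubic graph admits a 2-colouring of its vertex set (not necessarily with equal colour classes) such that every monochromatic connected component has at most 2 vertices. -/
open SimpleGraph Finset

section Aux
open Classical
variable {V : Type*} [Fintype V]

lemma incidence_ncard (H : SimpleGraph V) (v : V) :
    {e ∈ H.edgeSet | v ∈ e}.ncard = (H.neighborSet v).ncard := by
  have himg : {e ∈ H.edgeSet | v ∈ e} = (fun u => s(v, u)) '' H.neighborSet v := by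
    ext e
    refine Sym2.ind (fun x y => ?_) e
    simp only [Set.mem_setOf_eq, SimpleGraph.mem_edgeSet, Sym2.mem_iff, Set.mem_image,
      SimpleGraph.mem_neighborSet]
    constructor
    · rintro ⟨hxy, rfl | rfl⟩
      · exact ⟨y, hxy, rfl⟩
      · exact ⟨x, hxy.symm, Sym2.eq_swap⟩
    · rintro ⟨u, hu, he⟩
      rcases Sym2.eq_iff.mp he with ⟨rfl, rfl⟩ | ⟨rfl, rfl⟩
      · exact ⟨hu, Or.inl rfl⟩
      · exact ⟨hu.symm, Or.inr rfl⟩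
  rw [himg, Set.ncard_image_of_injective _ (fun a b h => Sym2.congr_right.mp h)]

lemma edge_split (H : SimpleGraph V) (v : V) :
    H.edgeSet.ncard = (H.neighborSet v).ncard + {e ∈ H.edgeSet | v ∉ e}.ncard := by
  have hsplit : H.edgeSet = {e ∈ H.edgeSet | v ∈ e} ∪ {e ∈ H.edgeSet | v ∉ e} := by
    ext e; by_cases h : v ∈ e <;> simp [h]
  have hdisj : Disjoint {e ∈ H.edgeSet | v ∈ e} {e ∈ H.edgeSet | v ∉ e} := by
    rw [Set.disjoint_left]; rintro e ⟨_, he⟩ ⟨_, hne⟩; exact hne he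
  conv_lhs => rw [hsplit]
  rw [Set.ncard_union_eq hdisj (Set.toFinite _) (Set.toFinite _), incidence_ncard]

lemma flip_lt (G : SimpleGraph V) (hcubic : IsCubic G) (c : V → Bool) (v : V)
    (h2 : 2 ≤ ((monoSubgraph G c).neighborSet v).ncard) :
    ((monoSubgraph G (Function.update c v (!c v))).edgeSet).ncard <
      ((monoSubgraph G c).edgeSet).ncard := by
  set c' := Function.update c v (!c v) with hc'
  have hcv : c' v = !c v := Function.update_self v (!c v) c
  have hcu : ∀ u, u ≠ v → c' u = c u := fun u hu => Function.update_of_ne hu _ c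
  -- the outer edge sets agree
  have hO : {e ∈ (monoSubgraph G c').edgeSet | v ∉ e} =
      {e ∈ (monoSubgraph G c).edgeSet | v ∉ e} := by
    ext e
    refine Sym2.ind (fun x y => ?_) e
    simp only [Set.mem_setOf_eq, SimpleGraph.mem_edgeSet, Sym2.mem_iff, not_or]
    constructor
    · rintro ⟨⟨hadj, hcol⟩, hx, hy⟩
      exact ⟨⟨hadj, by rwa [hcu x (Ne.symm hx), hcu y (Ne.symm hy)] at hcol⟩, hx, hy⟩
    · rintro ⟨⟨hadj, hcol⟩, hx, hy⟩
      exact ⟨⟨hadj, by rwa [hcu x (Ne.symm hx), hcu y (Ne.symm hy)]⟩, hx, hy⟩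
  -- neighbour sets partition N_G(v)
  have hMsub : (monoSubgraph G c).neighborSet v ⊆ G.neighborSet v := fun u hu => hu.1
  have hM'eq : (monoSubgraph G c').neighborSet v =
      G.neighborSet v \ (monoSubgraph G c).neighborSet v := by
    ext u
    simp only [SimpleGraph.mem_neighborSet, monoSubgraph, Set.mem_diff]
    constructor
    · rintro ⟨hadj, hcol⟩
      refine ⟨hadj, fun h => ?_⟩
      rw [hcv, hcu u hadj.ne'] at hcol
      rw [← h.2] at hcol
      exact (Bool.not_ne_self (c v)) hcol
    · rintro ⟨hadj, hnot⟩
      refine ⟨hadj, ?_⟩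
      rw [hcv, hcu u hadj.ne']
      have : c v ≠ c u := fun h => hnot ⟨hadj, h⟩
      cases hb : c v <;> cases hb' : c u <;> simp_all
  have hM'card : ((monoSubgraph G c').neighborSet v).ncard ≤ 1 := by
    have hdiff : ((monoSubgraph G c').neighborSet v).ncard =
        (G.neighborSet v).ncard - ((monoSubgraph G c).neighborSet v).ncard := by
      rw [hM'eq, Set.ncard_diff hMsub (Set.toFinite _)]
    rw [hdiff, hcubic v]
    omega
  have e1 := edge_split (monoSubgraph G c) v
  have e2 := edge_split (monoSubgraph G c') v
  rw [hO] at e2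
  omega

end Aux

/-- Every cubic graph admits a 2-colouring (not necessarily balanced) in which
every monochromatic component has at most 2 vertices. -/
theorem cubic_colouring_components_le_two {V : Type*} [Fintype V] (G : SimpleGraph V)
    (hcubic : IsCubic G) :
    ∃ c : V → Bool, ∀ v : V, {w | (monoSubgraph G c).Reachable v w}.ncard ≤ 2 := by
  classical
  set f : (V → Bool) → ℕ := fun c => ((monoSubgraph G c).edgeSet).ncard with hf
  have hne : (Set.range f).Nonempty := ⟨f (fun _ => true), ⟨_, rfl⟩⟩
  obtain ⟨c, hc⟩ := Nat.sInf_mem hne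
  have hmin : ∀ c', f c ≤ f c' := fun c' => hc ▸ Nat.sInf_le ⟨c', rfl⟩
  refine ⟨c, fun v => ?_⟩
  -- every vertex has at most one monochromatic neighbour
  have hdeg : ∀ x : V, ((monoSubgraph G c).neighborSet x).ncard ≤ 1 := by
    intro x
    by_contra h
    have h2 : 2 ≤ ((monoSubgraph G c).neighborSet x).ncard := by omega
    exact absurd (hmin (Function.update c x (!c x))) (not_le.mpr (flip_lt G hcubic c x h2))
  set S : Set V := insert v ((monoSubgraph G c).neighborSet v) with hS
  have hclosed : ∀ x ∈ S, ∀ y, (monoSubgraph G c).Adj x y → y ∈ S := by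
    intro x hx y hxy
    rcases hx with rfl | hx
    · exact Set.mem_insert_of_mem _ hxy
    · have hvx : v ∈ (monoSubgraph G c).neighborSet x :=
        ((monoSubgraph G c).adj_symm hx : (monoSubgraph G c).Adj x v)
      have hyx : y ∈ (monoSubgraph G c).neighborSet x := hxy
      have := (Set.ncard_le_one_iff (Set.toFinite _)).mp (hdeg x) hyx hvx
      rw [this]
      exact Set.mem_insert v _
  have hwalk : ∀ {a b : V}, (monoSubgraph G c).Walk a b → a ∈ S → b ∈ S := by
    intro a b p
    induction p with
    | nil => exact id
    | cons h _ ih => exact fun ha => ih (hclosed _ ha _ h)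
  have hsub : {w | (monoSubgraph G c).Reachable v w} ⊆ S := by
    intro w hw
    obtain ⟨p⟩ := hw
    exact hwalk p (Set.mem_insert v _)
  calc {w | (monoSubgraph G c).Reachable v w}.ncard ≤ S.ncard :=
        Set.ncard_le_ncard hsub (Set.toFinite _)
    _ ≤ ((monoSubgraph G c).neighborSet v).ncard + 1 := Set.ncard_insert_le _ _
    _ ≤ 2 := by have := hdeg v; omega
end

section
/- A connected claw-free simple cubic graph in which every vertex lies in a diamond (i.e., a ring of diamonds) with k diamonds has exactly 4k vertices, and the diamonds are pairwise vertex-disjoint. -/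
open SimpleGraph Finset

/-- The family of vertex sets of induced diamonds of `G`. -/
def diamondSets {V : Type*} (G : SimpleGraph V) : Set (Set V) :=
  {S | ∃ f : Fin 4 → V, IsInducedDiamond G f ∧ Set.range f = S}


section RingOfDiamondsAux

set_option linter.unusedSectionVars false

lemma dadj_iff (i j : Fin 4) : diamondGraph.Adj i j ↔
    i ≠ j ∧ ¬(i = 0 ∧ j = 1) ∧ ¬(i = 1 ∧ j = 0) := by
  fin_cases i <;> fin_cases j <;> simp [diamondGraph, Sym2.eq_iff]

variable {V : Type*} [Fintype V] {G : SimpleGraph V} {f g : Fin 4 → V}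

lemma nbhd_eq (hcubic : IsCubic G) {v a b c : V} (hab : a ≠ b) (hac : a ≠ c) (hbc : b ≠ c)
    (ha : G.Adj v a) (hb : G.Adj v b) (hc : G.Adj v c) : G.neighborSet v = {a, b, c} := by
  have hsub : ({a, b, c} : Set V) ⊆ G.neighborSet v := by
    intro x hx
    rcases hx with rfl | rfl | rfl <;> assumption
  have h3 : ({a, b, c} : Set V).ncard = 3 := Set.ncard_eq_three.mpr ⟨a, b, c, hab, hac, hbc, rfl⟩
  exact (Set.eq_of_subset_of_ncard_le hsub (by rw [hcubic v, h3]) (Set.toFinite _)).symm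

lemma third_nbhd (hcubic : IsCubic G) {v a b : V} (hab : a ≠ b)
    (ha : G.Adj v a) (hb : G.Adj v b) :
    ∃ z, G.neighborSet v = {a, b, z} ∧ z ≠ a ∧ z ≠ b ∧ G.Adj v z := by
  have h := hcubic v
  obtain ⟨x, y, w, hxy, hxw, hyw, hset⟩ := Set.ncard_eq_three.mp h
  have hax : a ∈ ({x, y, w} : Set V) := hset ▸ ha
  have hbx : b ∈ ({x, y, w} : Set V) := hset ▸ hb
  have : ∃ z ∈ ({x, y, w} : Set V), z ≠ a ∧ z ≠ b ∧ ({x, y, w} : Set V) = {a, b, z} := by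
    rcases hax with rfl | rfl | rfl <;> rcases hbx with rfl | rfl | rfl <;>
      first
      | exact absurd rfl hab
      | · refine ⟨w, by simp, ?_, ?_, ?_⟩ <;> first | tauto | (ext t; simp; tauto)
      | · refine ⟨y, by simp, ?_, ?_, ?_⟩ <;> first | tauto | (ext t; simp; tauto)
      | · refine ⟨x, by simp, ?_, ?_, ?_⟩ <;> first | tauto | (ext t; simp; tauto)
  obtain ⟨z, hzmem, hza, hzb, heq⟩ := this
  exact ⟨z, by rw [hset, heq], hza, hzb, by have : z ∈ G.neighborSet v := hset ▸ hzmem; exact this⟩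

lemma dia_swap23 (hf : IsInducedDiamond G f) : IsInducedDiamond G (f ∘ Equiv.swap 2 3) := by
  refine ⟨hf.1.comp (Equiv.swap 2 3).injective, fun i j => ?_⟩
  rw [Function.comp_apply, Function.comp_apply, hf.2]
  simp only [dadj_iff]
  revert i j; decide

lemma dia_swap01 (hf : IsInducedDiamond G f) : IsInducedDiamond G (f ∘ Equiv.swap 0 1) := by
  refine ⟨hf.1.comp (Equiv.swap 0 1).injective, fun i j => ?_⟩
  rw [Function.comp_apply, Function.comp_apply, hf.2]
  simp only [dadj_iff]
  revert i j; decide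

lemma range_fin4 (f : Fin 4 → V) : Set.range f = {f 0, f 1, f 2, f 3} := by
  ext x
  constructor
  · rintro ⟨i, rfl⟩; fin_cases i <;> simp
  · rintro (rfl | rfl | rfl | rfl) <;> exact ⟨_, rfl⟩

lemma dia_adj (hf : IsInducedDiamond G f) {i j : Fin 4}
    (h1 : i ≠ j) (h2 : ¬(i = 0 ∧ j = 1)) (h3 : ¬(i = 1 ∧ j = 0)) : G.Adj (f i) (f j) :=
  (hf.2 i j).mpr ((dadj_iff i j).mpr ⟨h1, h2, h3⟩)

lemma dia_nadj01 (hf : IsInducedDiamond G f) : ¬ G.Adj (f 0) (f 1) := fun h => by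
  have := (dadj_iff 0 1).mp ((hf.2 0 1).mp h); tauto

/-- `v` is one of the two degree-3 vertices of an induced diamond with vertex set `S`. -/
def Deg3Data {V : Type*} (G : SimpleGraph V) (v : V) (S : Set V) : Prop :=
  ∃ a b w : V, S = insert v (G.neighborSet v) ∧ G.neighborSet v = {a, b, w} ∧
    G.neighborSet w = {a, b, v} ∧ ¬ G.Adj a b ∧ a ≠ b ∧ w ≠ a ∧ w ≠ b

/-- `v` is one of the two degree-2 vertices of an induced diamond with vertex set `S`. -/
def Deg2Data {V : Type*} (G : SimpleGraph V) (v : V) (S : Set V) : Prop :=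
  ∃ c d u z : V, S = {v, c, d, u} ∧ G.neighborSet v = {c, d, z} ∧
    G.neighborSet c = {v, u, d} ∧ G.neighborSet d = {v, u, c} ∧
    u ≠ v ∧ u ≠ c ∧ u ≠ d ∧ c ≠ d ∧ z ∉ ({v, c, d, u} : Set V)

/-- degree-3 case at index 2. -/
lemma deg3_at2 (hcubic : IsCubic G) (hf : IsInducedDiamond G f) :
    Deg3Data G (f 2) (Set.range f) := by
  have ne01 : f 0 ≠ f 1 := hf.1.ne (by decide)
  have ne03 : f 0 ≠ f 3 := hf.1.ne (by decide)
  have ne13 : f 1 ≠ f 3 := hf.1.ne (by decide)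
  have ne02 : f 0 ≠ f 2 := hf.1.ne (by decide)
  have ne12 : f 1 ≠ f 2 := hf.1.ne (by decide)
  have a20 : G.Adj (f 2) (f 0) := dia_adj hf (by decide) (by decide) (by decide)
  have a21 : G.Adj (f 2) (f 1) := dia_adj hf (by decide) (by decide) (by decide)
  have a23 : G.Adj (f 2) (f 3) := dia_adj hf (by decide) (by decide) (by decide)
  have a30 : G.Adj (f 3) (f 0) := dia_adj hf (by decide) (by decide) (by decide)
  have a31 : G.Adj (f 3) (f 1) := dia_adj hf (by decide) (by decide) (by decide)
  have hN2 : G.neighborSet (f 2) = {f 0, f 1, f 3} := nbhd_eq hcubic ne01 ne03 ne13 a20 a21 a23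
  have hN3 : G.neighborSet (f 3) = {f 0, f 1, f 2} := nbhd_eq hcubic ne01 ne02 ne12 a30 a31 a23.symm
  refine ⟨f 0, f 1, f 3, ?_, hN2, hN3, dia_nadj01 hf, ne01, ne03.symm, ne13.symm⟩
  rw [range_fin4, hN2]
  ext x; simp; tauto

/-- degree-2 case at index 0. -/
lemma deg2_at0 (hcubic : IsCubic G) (hf : IsInducedDiamond G f) :
    Deg2Data G (f 0) (Set.range f) := by
  have ne01 : f 0 ≠ f 1 := hf.1.ne (by decide)
  have ne02 : f 0 ≠ f 2 := hf.1.ne (by decide)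
  have ne03 : f 0 ≠ f 3 := hf.1.ne (by decide)
  have ne12 : f 1 ≠ f 2 := hf.1.ne (by decide)
  have ne13 : f 1 ≠ f 3 := hf.1.ne (by decide)
  have ne23 : f 2 ≠ f 3 := hf.1.ne (by decide)
  have a02 : G.Adj (f 0) (f 2) := dia_adj hf (by decide) (by decide) (by decide)
  have a03 : G.Adj (f 0) (f 3) := dia_adj hf (by decide) (by decide) (by decide)
  have a12 : G.Adj (f 1) (f 2) := dia_adj hf (by decide) (by decide) (by decide)
  have a13 : G.Adj (f 1) (f 3) := dia_adj hf (by decide) (by decide) (by decide)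
  have a23 : G.Adj (f 2) (f 3) := dia_adj hf (by decide) (by decide) (by decide)
  obtain ⟨z, hN0, hz2, hz3, hadj0z⟩ := third_nbhd hcubic ne23 a02 a03
  have hN2 : G.neighborSet (f 2) = {f 0, f 1, f 3} :=
    nbhd_eq hcubic ne01 ne03 ne13 a02.symm a12.symm a23
  have hN3 : G.neighborSet (f 3) = {f 0, f 1, f 2} :=
    nbhd_eq hcubic ne01 ne02 ne12 a03.symm a13.symm a23.symm
  have hz0 : z ≠ f 0 := fun h => G.loopless.irrefl (f 0) (h ▸ hadj0z)
  have hz1 : z ≠ f 1 := fun h => dia_nadj01 hf (h ▸ hadj0z)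
  refine ⟨f 2, f 3, f 1, z, ?_, hN0, hN2, hN3, ne01.symm, ne12, ne13, ne23, ?_⟩
  · rw [range_fin4]; ext x; simp; tauto
  · simp only [Set.mem_insert_iff, Set.mem_singleton_iff]
    tauto

lemma L33 {v : V} {S T : Set V} (hS : Deg3Data G v S) (hT : Deg3Data G v T) : S = T := by
  obtain ⟨_, _, _, h1, _⟩ := hS
  obtain ⟨_, _, _, h2, _⟩ := hT
  rw [h1, h2]

lemma L32 {v : V} {S T : Set V} (hS : Deg3Data G v S) (hT : Deg2Data G v T) : False := by
  obtain ⟨a, b, w, -, hNv, hNw, hab, hab', hwa, hwb⟩ := hS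
  obtain ⟨c, d, u, z, -, hNv', hNc, hNd, huv, huc, hud, hcd, -⟩ := hT
  have hba : ¬ G.Adj b a := fun h => hab h.symm
  have adj_cd : G.Adj c d := by
    have : d ∈ G.neighborSet c := by rw [hNc]; simp
    exact this
  have adj_cu : G.Adj c u := by
    have : u ∈ G.neighborSet c := by rw [hNc]; simp
    exact this
  have adj_du : G.Adj d u := by
    have : u ∈ G.neighborSet d := by rw [hNd]; simp
    exact this
  have hc_mem : c = a ∨ c = b ∨ c = w := by
    have : c ∈ G.neighborSet v := by rw [hNv']; simp
    rw [hNv] at this; simpa using this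
  have hd_mem : d = a ∨ d = b ∨ d = w := by
    have : d ∈ G.neighborSet v := by rw [hNv']; simp
    rw [hNv] at this; simpa using this
  have key : ∀ o : V, G.Adj w u → G.Adj o u → o ≠ u → (o = a ∨ o = b) → False := by
    intro o hwu hou hne ho
    have hm : u ∈ G.neighborSet w := hwu
    rw [hNw] at hm
    rcases hm with rfl | rfl | rfl
    · rcases ho with rfl | rfl
      · exact hne rfl
      · exact hba hou
    · rcases ho with rfl | rfl
      · exact hab hou
      · exact hne rfl
    · exact huv rfl
  rcases hc_mem with hc | hc | hc <;> rcases hd_mem with hd | hd | hd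
  · exact hcd (hc.trans hd.symm)
  · exact hab (hd ▸ hc ▸ adj_cd)
  · exact key a (hd ▸ adj_du) (hc ▸ adj_cu) (fun hh => huc (hc.trans hh).symm) (Or.inl rfl)
  · exact hba (hd ▸ hc ▸ adj_cd)
  · exact hcd (hc.trans hd.symm)
  · exact key b (hd ▸ adj_du) (hc ▸ adj_cu) (fun hh => huc (hc.trans hh).symm) (Or.inr rfl)
  · exact key a (hc ▸ adj_cu) (hd ▸ adj_du) (fun hh => hud (hd.trans hh).symm) (Or.inl rfl)
  · exact key b (hc ▸ adj_cu) (hd ▸ adj_du) (fun hh => hud (hd.trans hh).symm) (Or.inr rfl)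
  · exact hcd (hc.trans hd.symm)

lemma L00 {v : V} {S T : Set V} (hS : Deg2Data G v S) (hT : Deg2Data G v T) : S = T := by
  obtain ⟨c, d, u, z, hSeq, hNv, hNc, hNd, huv, huc, hud, hcd, hz⟩ := hS
  obtain ⟨c', d', u', z', hTeq, hNv', hNc', hNd', hu'v, hu'c, hu'd, hc'd', hz'⟩ := hT
  simp only [Set.mem_insert_iff, Set.mem_singleton_iff, not_or] at hz
  obtain ⟨hzv, hzc, hzd, hzu⟩ := hz
  have adj_c'd' : G.Adj c' d' := by
    have : d' ∈ G.neighborSet c' := by rw [hNc']; simp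
    exact this
  have adj_c'u' : G.Adj c' u' := by
    have : u' ∈ G.neighborSet c' := by rw [hNc']; simp
    exact this
  have hc'_mem : c' = c ∨ c' = d ∨ c' = z := by
    have : c' ∈ G.neighborSet v := by rw [hNv']; simp
    rw [hNv] at this; simpa using this
  have hd'_mem : d' = c ∨ d' = d ∨ d' = z := by
    have : d' ∈ G.neighborSet v := by rw [hNv']; simp
    rw [hNv] at this; simpa using this
  have hzadj : ∀ y : V, G.Adj z y → (y = c ∨ y = d) → False := by
    intro y hzy hy
    rcases hy with h | h
    · have hm : z ∈ G.neighborSet c := (h ▸ hzy).symm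
      rw [hNc] at hm
      rcases hm with h2 | h2 | h2
      exacts [hzv h2, hzu h2, hzd h2]
    · have hm : z ∈ G.neighborSet d := (h ▸ hzy).symm
      rw [hNd] at hm
      rcases hm with h2 | h2 | h2
      exacts [hzv h2, hzu h2, hzc h2]
  have hc'z : c' ≠ z := by
    intro h
    rcases hd'_mem with h2 | h2 | h2
    · exact hzadj d' (h ▸ adj_c'd') (Or.inl h2)
    · exact hzadj d' (h ▸ adj_c'd') (Or.inr h2)
    · exact hc'd' (h.trans h2.symm)
  have hd'z : d' ≠ z := by
    intro h
    rcases hc'_mem with h2 | h2 | h2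
    · exact hzadj c' (h ▸ adj_c'd'.symm) (Or.inl h2)
    · exact hzadj c' (h ▸ adj_c'd'.symm) (Or.inr h2)
    · exact hc'd' (h2.trans h.symm)
  have hc'_cd : c' = c ∨ c' = d := by tauto
  have hd'_cd : d' = c ∨ d' = d := by tauto
  rcases hc'_cd with hc | hc
  · have hd : d' = d := by
      rcases hd'_cd with h2 | h2
      · exact absurd (hc.trans h2.symm) hc'd'
      · exact h2
    have hm : u' ∈ G.neighborSet c := hc ▸ adj_c'u'
    rw [hNc] at hm
    have hu : u' = u := by
      rcases hm with h2 | h2 | h2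
      · exact absurd h2 hu'v
      · exact h2
      · exact absurd (h2.trans hd.symm) hu'd
    rw [hSeq, hTeq, hc, hd, hu]
  · have hd : d' = c := by
      rcases hd'_cd with h2 | h2
      · exact h2
      · exact absurd (hc.trans h2.symm) hc'd'
    have hm : u' ∈ G.neighborSet d := hc ▸ adj_c'u'
    rw [hNd] at hm
    have hu : u' = u := by
      rcases hm with h2 | h2 | h2
      · exact absurd h2 hu'v
      · exact h2
      · exact absurd (h2.trans hd.symm) hu'd
    rw [hSeq, hTeq, hc, hd, hu]
    exact congrArg (insert v) (Set.insert_comm c d {u})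

lemma dia_cases (hcubic : IsCubic G) (hf : IsInducedDiamond G f) (i : Fin 4) :
    Deg2Data G (f i) (Set.range f) ∨ Deg3Data G (f i) (Set.range f) := by
  fin_cases i
  · exact Or.inl (deg2_at0 hcubic hf)
  · left
    have h := deg2_at0 hcubic (dia_swap01 hf)
    have h1 : (f ∘ (Equiv.swap 0 1 : Fin 4 ≃ Fin 4)) 0 = f 1 := by simp
    have h2 : Set.range (f ∘ (Equiv.swap 0 1 : Fin 4 ≃ Fin 4)) = Set.range f :=
      (Equiv.swap 0 1).surjective.range_comp f
    rwa [h1, h2] at h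
  · exact Or.inr (deg3_at2 hcubic hf)
  · right
    have h := deg3_at2 hcubic (dia_swap23 hf)
    have h1 : (f ∘ (Equiv.swap 2 3 : Fin 4 ≃ Fin 4)) 2 = f 3 := by simp
    have h2 : Set.range (f ∘ (Equiv.swap 2 3 : Fin 4 ≃ Fin 4)) = Set.range f :=
      (Equiv.swap 2 3).surjective.range_comp f
    rwa [h1, h2] at h

lemma diamond_eq (hcubic : IsCubic G) (hf : IsInducedDiamond G f)
    (hg : IsInducedDiamond G g) (i j : Fin 4) (h : f i = g j) :
    Set.range f = Set.range g := by
  rcases dia_cases hcubic hf i with h2 | h3 <;> rcases dia_cases hcubic hg j with k2 | k3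
  · exact L00 h2 (h.symm ▸ k2)
  · exact (L32 (h.symm ▸ k3) h2).elim
  · exact (L32 h3 (h.symm ▸ k2)).elim
  · exact L33 h3 (h.symm ▸ k3)

end RingOfDiamondsAux

/-- A ring of diamonds (a connected claw-free simple cubic graph in which every
vertex lies in a diamond) with `k` diamonds has exactly `4k` vertices, and its
diamonds are pairwise vertex-disjoint. -/
theorem ringOfDiamonds_structure {V : Type*} [Fintype V] (G : SimpleGraph V)
    (hconn : G.Connected) (hclawfree : ClawFree G) (hcubic : IsCubic G)
    (hcover : ∀ v : V, ∃ S ∈ diamondSets G, v ∈ S)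
    (k : ℕ) (hk : (diamondSets G).ncard = k) :
    (∀ S ∈ diamondSets G, ∀ T ∈ diamondSets G, S = T ∨ Disjoint S T) ∧
      Fintype.card V = 4 * k := by
  classical
  have hdisj : ∀ S ∈ diamondSets G, ∀ T ∈ diamondSets G, S = T ∨ Disjoint S T := by
    rintro S ⟨f, hf, rfl⟩ T ⟨g, hg, rfl⟩
    rw [or_iff_not_imp_right]
    intro hnd
    obtain ⟨v, hvS, hvT⟩ := Set.not_disjoint_iff.mp hnd
    obtain ⟨i, rfl⟩ := hvS
    obtain ⟨j, hj⟩ := hvT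
    exact diamond_eq hcubic hf hg i j hj.symm
  refine ⟨hdisj, ?_⟩
  have hfinD : (diamondSets G).Finite := Set.toFinite _
  have hcard4 : ∀ S ∈ diamondSets G, (Set.toFinite S).toFinset.card = 4 := by
    rintro S ⟨f, hf, rfl⟩
    rw [← Set.ncard_eq_toFinset_card, ← Set.image_univ,
      Set.ncard_image_of_injective _ hf.1, Set.ncard_univ]
    simp [Nat.card_eq_fintype_card]
  have huniv : (Finset.univ : Finset V) =
      hfinD.toFinset.biUnion (fun S => (Set.toFinite S).toFinset) := by
    ext v
    simp only [Finset.mem_univ, Finset.mem_biUnion, Set.Finite.mem_toFinset, true_iff]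
    obtain ⟨S, hS, hvS⟩ := hcover v
    exact ⟨S, hS, hvS⟩
  have hpd : ∀ S ∈ hfinD.toFinset, ∀ T ∈ hfinD.toFinset, S ≠ T →
      Disjoint (Set.toFinite S).toFinset (Set.toFinite T).toFinset := by
    intro S hS T hT hne
    rw [Set.Finite.mem_toFinset] at hS hT
    rcases hdisj S hS T hT with h | h
    · exact absurd h hne
    · rw [Set.Finite.disjoint_toFinset]
      exact h
  calc Fintype.card V = (Finset.univ : Finset V).card := rfl
    _ = (hfinD.toFinset.biUnion (fun S => (Set.toFinite S).toFinset)).card := by rw [huniv]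
    _ = ∑ S ∈ hfinD.toFinset, (Set.toFinite S).toFinset.card := Finset.card_biUnion hpd
    _ = ∑ S ∈ hfinD.toFinset, 4 := by
        refine Finset.sum_congr rfl fun S hS => ?_
        exact hcard4 S (hfinD.mem_toFinset.mp hS)
    _ = hfinD.toFinset.card * 4 := by rw [Finset.sum_const, smul_eq_mul]
    _ = 4 * k := by rw [← Set.ncard_eq_toFinset_card _ hfinD, hk, Nat.mul_comm]
end
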